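/- arXiv:2111.02746 — 9 statements merged into one kernel-verified Lean document; each statement's English description precedes it below -/
import Mathlib

section
/- Let n ≥ 2 and let k = min{ j ∈ ℤ⁺ : 3^j ≥ √n }. Then the values a³ + a for 1 ≤ a ≤ n are pairwise distinct modulo 3^{2k}; that is, for all integers 1 ≤ a < b ≤ n one has b³ + b ≢ a³ + a (mod 3^{2k}). -/
/-- Let `n ≥ 2` and let `k` be the least positive integer `j` with `3^j ≥ √n`.  Then the
values `a³ + a` for `1 ≤ a ≤ n` are pairwise distinct modulo `3^(2k)`. -/
theorem distinct_mod_three_pow (n : ℕ) (hn : 2 ≤ n) (k : ℕ)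
    (hk : IsLeast {j : ℕ | 1 ≤ j ∧ Real.sqrt n ≤ 3 ^ j} k) :
    ∀ a b : ℕ, 1 ≤ a → a < b → b ≤ n →
      ¬ (b ^ 3 + b ≡ a ^ 3 + a [MOD 3 ^ (2 * k)]) := by
  intro a b ha hab hbn h
  -- n ≤ 3 ^ (2 * k)
  obtain ⟨⟨hk1, hks⟩, _⟩ := hk
  have hreal : (n : ℝ) ≤ (3 : ℝ) ^ (2 * k) := by
    have h1 : (n : ℝ) = Real.sqrt n ^ 2 := (Real.sq_sqrt (by positivity)).symm
    have h2 : Real.sqrt n ^ 2 ≤ ((3 : ℝ) ^ k) ^ 2 := by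
      have := Real.sqrt_nonneg (n : ℝ)
      nlinarith
    rw [h1, ← pow_mul, mul_comm k 2] at *
    linarith
  have hn3 : n ≤ 3 ^ (2 * k) := by
    have h3 : ((3 ^ (2 * k) : ℕ) : ℝ) = (3 : ℝ) ^ (2 * k) := by push_cast; ring
    exact_mod_cast h3 ▸ hreal
  -- divisibility over ℤ
  have hle' : a ^ 3 + a ≤ b ^ 3 + b := by
    have : a ≤ b := hab.le
    nlinarith [Nat.pow_le_pow_left this 3]
  have hdvd : (3 ^ (2 * k) : ℤ) ∣ ((b : ℤ) ^ 3 + b) - ((a : ℤ) ^ 3 + a) := by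
    have := (Nat.modEq_iff_dvd' hle').mp h.symm
    zify [hle'] at this
    exact_mod_cast this
  have hfac : ((b : ℤ) ^ 3 + b) - ((a : ℤ) ^ 3 + a)
      = ((b : ℤ) - a) * ((a : ℤ) ^ 2 + a * b + b ^ 2 + 1) := by ring
  rw [hfac] at hdvd
  -- second factor not divisible by 3
  have hnot3 : ¬ (3 : ℤ) ∣ ((a : ℤ) ^ 2 + a * b + b ^ 2 + 1) := by
    intro hd
    have key : ∀ x y : ZMod 3, x ^ 2 + x * y + y ^ 2 + 1 ≠ 0 := by decide
    have : ((a : ZMod 3) ^ 2 + a * b + b ^ 2 + 1) = 0 := by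
      have := (ZMod.intCast_zmod_eq_zero_iff_dvd ((a : ℤ) ^ 2 + a * b + b ^ 2 + 1) 3).mpr hd
      push_cast at this
      exact_mod_cast this
    exact key _ _ this
  have hcop : IsCoprime ((3 : ℤ) ^ (2 * k)) ((a : ℤ) ^ 2 + a * b + b ^ 2 + 1) := by
    apply IsCoprime.pow_left
    exact Int.prime_three.coprime_iff_not_dvd.mpr hnot3
  have hdvd2 : (3 ^ (2 * k) : ℤ) ∣ ((b : ℤ) - a) := hcop.dvd_of_dvd_mul_right hdvd
  have hpos : (0 : ℤ) < (b : ℤ) - a := sub_pos.mpr (by exact_mod_cast hab)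
  have hle := Int.le_of_dvd hpos hdvd2
  have : (b : ℤ) - a < n := by
    have : (b : ℤ) ≤ n := by exact_mod_cast hbn
    have ha' : (1 : ℤ) ≤ a := by exact_mod_cast ha
    linarith
  have : ((3 : ℤ) ^ (2 * k)) < n := lt_of_le_of_lt hle this
  have : (n : ℤ) ≤ 3 ^ (2 * k) := by exact_mod_cast hn3
  linarith
end

section
/- Suppose m = δ·p^r, where δ ≥ 4 is an integer, p ≥ 5 is a prime, r is a positive integer and p ∤ δ. If n is a positive integer with p^{2r} + δ²·p ≤ n, then there exist integers 1 ≤ a < b ≤ n such that b³ + b ≡ a³ + a (mod m²). -/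
-- Step 1: exists t s in ZMod p with s ≠ 0 and s^2 = -3*(t^2+4)
private lemma exists_ts (p : ℕ) [Fact p.Prime] (hp5 : 5 ≤ p) :
    ∃ t s : ZMod p, s ≠ 0 ∧ s ^ 2 = -3 * (t ^ 2 + 4) := by
  have h3 : (3 : ZMod p) ≠ 0 := by
    have : ((3 : ℕ) : ZMod p) ≠ 0 := by
      rw [Ne, ZMod.natCast_eq_zero_iff]
      intro h
      have := Nat.le_of_dvd (by norm_num) h
      omega
    simpa using this
  have h2 : (2 : ZMod p) ≠ 0 := by
    have : ((2 : ℕ) : ZMod p) ≠ 0 := by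
      rw [Ne, ZMod.natCast_eq_zero_iff]
      intro h
      have := Nat.le_of_dvd (by norm_num) h
      omega
    simpa using this
  by_cases hsq : IsSquare (-3 : ZMod p)
  · obtain ⟨s₀, hs₀⟩ := hsq
    have hs₀ne : s₀ ≠ 0 := by
      intro h
      rw [h, mul_zero] at hs₀
      exact (neg_ne_zero.mpr h3) hs₀
    refine ⟨0, 2 * s₀, mul_ne_zero h2 hs₀ne, ?_⟩
    have : s₀ * s₀ = -3 := hs₀.symm
    linear_combination 4 * this
  · have hex : ∃ t : ZMod p, ¬ IsSquare (t ^ 2 + 4) := by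
      by_contra hall
      push_neg at hall
      have h4k : ∀ k : ℕ, IsSquare ((4 * k : ℕ) : ZMod p) := by
        intro k
        induction k with
        | zero => simp
        | succ n ih =>
          obtain ⟨t, ht⟩ := ih
          have h := hall t
          have : ((4 * (n + 1) : ℕ) : ZMod p) = t ^ 2 + 4 := by
            push_cast
            rw [sq, ← ht]
            push_cast
            ring
          rw [this]
          exact h
      have h4 : (4 : ZMod p) ≠ 0 := by
        have : ((4 : ℕ) : ZMod p) ≠ 0 := by
          rw [Ne, ZMod.natCast_eq_zero_iff]
          intro h
          have := Nat.le_of_dvd (by norm_num) h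
          omega
        simpa using this
      have hallsq : ∀ x : ZMod p, IsSquare x := by
        intro x
        have h := h4k (x * (4 : ZMod p)⁻¹).val
        have heq : ((4 * (x * (4 : ZMod p)⁻¹).val : ℕ) : ZMod p) = x := by
          rw [Nat.cast_mul, ZMod.natCast_zmod_val]
          push_cast
          rw [mul_comm x, ← mul_assoc, mul_inv_cancel₀ h4, one_mul]
        rwa [heq] at h
      have hchar : ringChar (ZMod p) ≠ 2 := by
        rw [ZMod.ringChar_zmod_n]
        omega
      obtain ⟨x, hx⟩ := FiniteField.exists_nonsquare hchar
      exact hx (hallsq x)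
    obtain ⟨t, ht⟩ := hex
    have hne : t ^ 2 + 4 ≠ 0 := by
      intro h
      exact ht (h ▸ (IsSquare.zero))
    have hq1 : quadraticChar (ZMod p) (-3) = -1 :=
      quadraticChar_neg_one_iff_not_isSquare.mpr hsq
    have hq2 : quadraticChar (ZMod p) (t ^ 2 + 4) = -1 :=
      quadraticChar_neg_one_iff_not_isSquare.mpr ht
    have hprodne : (-3 : ZMod p) * (t ^ 2 + 4) ≠ 0 :=
      mul_ne_zero (neg_ne_zero.mpr h3) hne
    have hq : quadraticChar (ZMod p) (-3 * (t ^ 2 + 4)) = 1 := by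
      rw [map_mul, hq1, hq2]; norm_num
    obtain ⟨s, hs⟩ := (quadraticChar_one_iff_isSquare hprodne).mp hq
    refine ⟨t, s, ?_, by rw [hs]; ring⟩
    intro h
    rw [h, mul_zero] at hs
    exact hprodne hs


private lemma hensel_quad (p : ℕ) [Fact p.Prime] (D A₁ : ℤ)
    (h1 : (p : ℤ) ∣ 3 * A₁ ^ 2 + 3 * D * A₁ + D ^ 2 + 1)
    (h2 : ¬ (p : ℤ) ∣ 6 * A₁ + 3 * D) :
    ∀ k : ℕ, 1 ≤ k → ∃ A : ℤ,
      (p : ℤ) ^ k ∣ 3 * A ^ 2 + 3 * D * A + D ^ 2 + 1 ∧ ¬ (p : ℤ) ∣ 6 * A + 3 * D := by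
  intro k hk
  induction k, hk using Nat.le_induction with
  | base => exact ⟨A₁, by simpa using h1, h2⟩
  | succ k hk ih =>
    obtain ⟨A, hA, hA'⟩ := ih
    obtain ⟨c, hc⟩ := hA
    set w : ZMod p := ((6 * A + 3 * D : ℤ) : ZMod p) with hw
    have hwne : w ≠ 0 := by rwa [hw, Ne, ZMod.intCast_zmod_eq_zero_iff_dvd]
    set y : ℤ := -c * ((w⁻¹).val : ℤ) with hy
    have key : (p : ℤ) ∣ c + y * (6 * A + 3 * D) := by
      rw [← ZMod.intCast_zmod_eq_zero_iff_dvd]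
      have hval : ((w⁻¹.val : ℕ) : ZMod p) = w⁻¹ := ZMod.natCast_zmod_val _
      have hw2 : ((6 * A + 3 * D : ℤ) : ZMod p) = w := rfl
      push_cast [hy]
      push_cast at hw2
      rw [hw2, hval, mul_assoc, inv_mul_cancel₀ hwne, mul_one]
      ring
    obtain ⟨e, he⟩ := key
    refine ⟨A + (p : ℤ) ^ k * y, ?_, ?_⟩
    · have expand : 3 * (A + (p : ℤ) ^ k * y) ^ 2 + 3 * D * (A + (p : ℤ) ^ k * y) + D ^ 2 + 1
          = (p : ℤ) ^ k * (c + y * (6 * A + 3 * D)) + 3 * ((p : ℤ) ^ k) ^ 2 * y ^ 2 := by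
        linear_combination hc
      rw [expand, he]
      have d2 : (p : ℤ) ^ (k + 1) ∣ 3 * ((p : ℤ) ^ k) ^ 2 * y ^ 2 := by
        obtain ⟨q, hq⟩ : (p : ℤ) ^ (k + 1) ∣ ((p : ℤ) ^ k) ^ 2 := by
          rw [← pow_mul]
          exact pow_dvd_pow _ (by omega)
        exact ⟨3 * q * y ^ 2, by rw [hq]; ring⟩
      exact dvd_add ⟨e, by ring⟩ d2
    · intro hdvd
      apply hA'
      have : (p : ℤ) ∣ 6 * ((p : ℤ) ^ k * y) := by
        refine Dvd.dvd.mul_left ?_ 6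
        exact dvd_mul_of_dvd_left (dvd_pow_self _ (by omega)) y
      have := hdvd.sub this
      convert this using 1
      exacts [rfl, by ring]


/-- Suppose `m = δ·p^r` with `δ ≥ 4`, `p ≥ 5` prime, `r ≥ 1` and `p ∤ δ`.  If
`p^(2r) + δ²·p ≤ n` then there exist `1 ≤ a < b ≤ n` with `b³ + b ≡ a³ + a (mod m²)`. -/
theorem collision_case_vi_aux (m n δ r p : ℕ) (hn : 0 < n)
    (hp : p.Prime) (hp5 : 5 ≤ p) (hδ : 4 ≤ δ) (hr : 1 ≤ r) (hpδ : ¬ p ∣ δ)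
    (hm : m = δ * p ^ r) (hle : p ^ (2 * r) + δ ^ 2 * p ≤ n) :
    ∃ a b : ℕ, 1 ≤ a ∧ a < b ∧ b ≤ n ∧ b ^ 3 + b ≡ a ^ 3 + a [MOD m ^ 2] := by
  haveI : Fact p.Prime := ⟨hp⟩
  obtain ⟨t, s, hs0, hts⟩ := exists_ts p hp5
  have hppos : 0 < p := by omega
  -- choose e and d = δ^2 * e with (d : ZMod p) = t
  have hδ2 : ((δ ^ 2 : ℕ) : ZMod p) ≠ 0 := by
    rw [Ne, ZMod.natCast_eq_zero_iff]
    exact fun h => hpδ (hp.dvd_of_dvd_pow h)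
  set u : ZMod p := t * ((δ ^ 2 : ℕ) : ZMod p)⁻¹ with hu
  set e : ℕ := if u = 0 then p else u.val with he
  have he1 : 1 ≤ e := by
    rw [he]; split
    · omega
    · next h => exact Nat.one_le_iff_ne_zero.mpr fun h0 => h (by rwa [ZMod.val_eq_zero] at h0)
  have hep : e ≤ p := by
    rw [he]; split
    · exact le_refl p
    · exact le_of_lt (ZMod.val_lt u)
  have heu : ((e : ℕ) : ZMod p) = u := by
    rw [he]; split
    · next h => rw [ZMod.natCast_self]; exact h.symm
    · exact ZMod.natCast_zmod_val u
  set d : ℕ := δ ^ 2 * e with hd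
  have hd1 : 1 ≤ d := by
    have : 1 * 1 ≤ δ ^ 2 * e := Nat.mul_le_mul (by nlinarith) he1
    omega
  have hdp : d ≤ δ ^ 2 * p := Nat.mul_le_mul_left _ hep
  have hd_cast : ((d : ℕ) : ZMod p) = t := by
    rw [hd, Nat.cast_mul, heu, hu, mul_comm t, ← mul_assoc]
    rw [show ((δ ^ 2 : ℕ) : ZMod p) = ((δ : ZMod p)) ^ 2 by push_cast; ring] at hδ2 ⊢
    rw [mul_inv_cancel₀ hδ2, one_mul]
  -- the root a₀ mod p
  have h6 : (6 : ZMod p) ≠ 0 := by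
    have : ((6 : ℕ) : ZMod p) ≠ 0 := by
      rw [Ne, ZMod.natCast_eq_zero_iff]
      intro h
      have h23 : p ∣ 2 * 3 := by simpa using h
      rcases (Nat.Prime.dvd_mul hp).mp h23 with h' | h' <;>
        · have := Nat.le_of_dvd (by norm_num) h'
          omega
    simpa using this
  set a₀ : ZMod p := (s - 3 * t) * (6 : ZMod p)⁻¹ with ha₀
  have h6a : (6 : ZMod p) * a₀ = s - 3 * t := by
    rw [ha₀, mul_comm ((s - 3 * t)) _, ← mul_assoc, mul_inv_cancel₀ h6, one_mul]
  have hroot : 3 * a₀ ^ 2 + 3 * t * a₀ + t ^ 2 + 1 = 0 := by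
    have h36 : (36 : ZMod p) ≠ 0 := by
      rw [show (36 : ZMod p) = 6 ^ 2 by norm_num]
      exact pow_ne_zero 2 h6
    have key : (36 : ZMod p) * (3 * a₀ ^ 2 + 3 * t * a₀ + t ^ 2 + 1) = 0 := by
      linear_combination (18 * a₀ + 3 * s + 9 * t) * h6a + 3 * hts
    rcases mul_eq_zero.mp key with h | h
    · exact absurd h h36
    · exact h
  set A₁ : ℤ := (a₀.val : ℤ) with hA₁def
  have hA₁ : ((A₁ : ℤ) : ZMod p) = a₀ := by
    rw [hA₁def]; push_cast; exact ZMod.natCast_zmod_val a₀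
  have h1 : (p : ℤ) ∣ 3 * A₁ ^ 2 + 3 * (d : ℤ) * A₁ + (d : ℤ) ^ 2 + 1 := by
    rw [← ZMod.intCast_zmod_eq_zero_iff_dvd]
    push_cast
    rw [hA₁, hd_cast]
    exact hroot
  have h2 : ¬ (p : ℤ) ∣ 6 * A₁ + 3 * (d : ℤ) := by
    intro h
    rw [← ZMod.intCast_zmod_eq_zero_iff_dvd] at h
    push_cast at h
    rw [hA₁, hd_cast] at h
    apply hs0
    linear_combination h - h6a
  -- Hensel lift to p^(2r)
  obtain ⟨A, hA, -⟩ := hensel_quad p (d : ℤ) A₁ h1 h2 (2 * r) (by omega)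
  -- choose natural a in [1, P] congruent to A mod P
  set P : ℕ := p ^ (2 * r) with hP
  have hP1 : 1 ≤ P := Nat.one_le_pow _ _ hppos
  have hPZ : (0 : ℤ) < (P : ℤ) := by exact_mod_cast hP1
  set a : ℕ := if (A % (P : ℤ)).toNat = 0 then P else (A % (P : ℤ)).toNat with ha
  have hmodnn : 0 ≤ A % (P : ℤ) := Int.emod_nonneg A (by omega)
  have hmodlt : A % (P : ℤ) < (P : ℤ) := Int.emod_lt_of_pos A hPZ
  have ha1 : 1 ≤ a := by
    rw [ha]; split
    · exact hP1
    · omega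
  have haP : a ≤ P := by
    rw [ha]; split
    · exact le_refl P
    · omega
  have hamod : (a : ℤ) ≡ A [ZMOD (P : ℤ)] := by
    rw [ha]; split
    · next h =>
      have h0 : A % (P : ℤ) = 0 := by omega
      show ((P : ℕ) : ℤ) % (P : ℤ) = A % (P : ℤ)
      rw [Int.emod_self, h0]
    · next h =>
      have htn : ((A % (P : ℤ)).toNat : ℤ) = A % (P : ℤ) := Int.toNat_of_nonneg hmodnn
      show ((A % (P : ℤ)).toNat : ℤ) % (P : ℤ) = A % (P : ℤ)
      rw [htn]
      exact Int.emod_emod_of_dvd A dvd_rfl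
  set b : ℕ := a + d with hb
  have hble : b ≤ n := le_trans (Nat.add_le_add (le_trans haP (le_of_eq hP)) hdp) hle
  refine ⟨a, b, ha1, by omega, hble, ?_⟩
  -- divisibility
  have hga : ((P : ℕ) : ℤ) ∣ 3 * (a : ℤ) ^ 2 + 3 * (d : ℤ) * (a : ℤ) + (d : ℤ) ^ 2 + 1 := by
    have h' : 3 * (a : ℤ) ^ 2 + 3 * (d : ℤ) * (a : ℤ) + (d : ℤ) ^ 2 + 1
        ≡ 3 * A ^ 2 + 3 * (d : ℤ) * A + (d : ℤ) ^ 2 + 1 [ZMOD (P : ℤ)] := by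
      have hpow := hamod.pow 2
      exact (((hpow.mul_left 3).add (hamod.mul_left (3 * (d : ℤ)))).add_right
        ((d : ℤ) ^ 2)).add_right 1
    have hdiff := h'.symm.dvd
    have hPA : ((P : ℕ) : ℤ) ∣ 3 * A ^ 2 + 3 * (d : ℤ) * A + (d : ℤ) ^ 2 + 1 := by
      rw [hP]; push_cast; exact hA
    have h3 := dvd_add hPA hdiff
    rwa [show 3 * A ^ 2 + 3 * (d : ℤ) * A + (d : ℤ) ^ 2 + 1 +
        (3 * (a : ℤ) ^ 2 + 3 * (d : ℤ) * (a : ℤ) + (d : ℤ) ^ 2 + 1 -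
          (3 * A ^ 2 + 3 * (d : ℤ) * A + (d : ℤ) ^ 2 + 1))
        = 3 * (a : ℤ) ^ 2 + 3 * (d : ℤ) * (a : ℤ) + (d : ℤ) ^ 2 + 1 from by ring] at h3
  rw [Nat.ModEq.comm, Nat.modEq_iff_dvd]
  have hmd : ((m ^ 2 : ℕ) : ℤ) = ((δ ^ 2 : ℕ) : ℤ) * ((P : ℕ) : ℤ) := by
    rw [hm, hP]; push_cast; ring
  rw [hmd]
  have hdd : ((δ ^ 2 : ℕ) : ℤ) ∣ (d : ℤ) := ⟨(e : ℤ), by rw [hd]; push_cast; ring⟩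
  have hprod := mul_dvd_mul hdd hga
  have heq : ((b ^ 3 + b : ℕ) : ℤ) - ((a ^ 3 + a : ℕ) : ℤ)
      = (d : ℤ) * (3 * (a : ℤ) ^ 2 + 3 * (d : ℤ) * (a : ℤ) + (d : ℤ) ^ 2 + 1) := by
    rw [hb]; push_cast; ring
  rw [heq]
  exact hprod
end

section
/- Let n ≥ 2000 and let k = min{ j ∈ ℤ⁺ : 3^j ≥ √n }. Suppose m = δ·p^r with √n < m < 3^k, where δ ≥ 4 is an integer, p ≥ 5 is a prime, r is a positive integer, p ∤ δ and p^r ≥ 11. Then there exist integers 1 ≤ a < b ≤ n such that b³ + b ≡ a³ + a (mod m²). -/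
open Polynomial

lemma exists_uv (p : ℕ) [Fact p.Prime] (hp5 : 5 ≤ p) :
    ∃ u v : ZMod p, v ≠ 0 ∧ v ^ 2 = -3 * (u ^ 2 + 4) := by
  have hple : ∀ a : ℕ, a < p → a ≠ 0 → (a : ZMod p) ≠ 0 := by
    intro a ha ha0 h
    rw [ZMod.natCast_eq_zero_iff] at h
    exact absurd (Nat.le_of_dvd (Nat.pos_of_ne_zero ha0) h) (not_le.2 ha)
  have h2 : (2 : ZMod p) ≠ 0 := by
    have := hple 2 (by omega) (by norm_num); exact_mod_cast this
  have h3 : (3 : ZMod p) ≠ 0 := by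
    have := hple 3 (by omega) (by norm_num); exact_mod_cast this
  have h4 : (4 : ZMod p) ≠ 0 := by
    have := hple 4 (by omega) (by norm_num); exact_mod_cast this
  have hcard : Fintype.card (ZMod p) % 2 = 1 := by
    rw [ZMod.card]
    have hodd := (Fact.out : p.Prime).odd_of_ne_two (by omega)
    exact Nat.odd_iff.mp hodd
  obtain ⟨u, v, huv⟩ := FiniteField.exists_root_sum_quadratic
    (f := C (3 : ZMod p) * X ^ 2 + C 0 * X + C 12)
    (g := C (1 : ZMod p) * X ^ 2 + C 0 * X + C 0)
    (degree_quadratic h3) (degree_quadratic one_ne_zero) hcard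
  simp only [eval_add, eval_mul, eval_pow, eval_C, eval_X, zero_mul, add_zero, one_mul] at huv
  -- huv : 3 * u ^ 2 + 12 + v ^ 2 = 0  (roughly)
  by_cases hv : v = 0
  · subst hv
    have hu2 : u ^ 2 = -4 := by
      have h12 : (3 : ZMod p) * (u ^ 2 + 4) = 0 := by linear_combination huv
      rcases mul_eq_zero.mp h12 with h | h
      · exact absurd h h3
      · linear_combination h
    have hu0 : u ≠ 0 := by
      intro h; rw [h] at hu2; simp at hu2
      exact h4 hu2
    refine ⟨u / 2, 3 * (u / 2), mul_ne_zero h3 (div_ne_zero hu0 h2), ?_⟩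
    field_simp
    linear_combination (4 : ZMod p) * hu2
  · exact ⟨u, v, hv, by linear_combination huv⟩


lemma hensel_sq {p : ℕ} (hp : p.Prime) (hp5 : 5 ≤ p) (D : ℤ)
    (h1 : ∃ w : ℤ, ¬ (p:ℤ) ∣ w ∧ (p:ℤ) ∣ w ^ 2 - D) :
    ∀ j : ℕ, ∃ w : ℤ, ¬ (p:ℤ) ∣ w ∧ (p:ℤ) ^ (j+1) ∣ w ^ 2 - D := by
  have hpI : Prime (p : ℤ) := Nat.prime_iff_prime_int.mp hp
  intro j
  induction j with
  | zero => simpa using h1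
  | succ j ih =>
    obtain ⟨w, hw, s, hs⟩ := ih
    have h2w : ¬ (p:ℤ) ∣ 2 * w := by
      intro h
      rcases hpI.dvd_mul.mp h with h | h
      · have h2 : p ∣ 2 := by exact_mod_cast h
        have := Nat.le_of_dvd (by norm_num) h2
        omega
      · exact hw h
    obtain ⟨x, y, hxy⟩ := (hpI.coprime_iff_not_dvd.mpr h2w).symm
    set t : ℤ := -(s * x) with htdef
    have hpz : 2 * w * t + s = (p:ℤ) * (s * y) := by
      linear_combination (-s) * hxy
    refine ⟨w + t * (p:ℤ) ^ (j+1), ?_, ?_⟩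
    · intro h
      apply hw
      have hdt : (p:ℤ) ∣ t * (p:ℤ) ^ (j+1) :=
        dvd_mul_of_dvd_right (dvd_pow_self _ (Nat.succ_ne_zero j)) t
      have := dvd_sub h hdt
      simpa using this
    · refine ⟨s * y + t ^ 2 * (p:ℤ) ^ j, ?_⟩
      have hexp : (p:ℤ) ^ (j + 1 + 1) = (p:ℤ) ^ (j+1) * p := by ring
      linear_combination hs + (p:ℤ)^(j+1) * hpz + (t^2 * (p:ℤ)^j) * hexp


lemma bound_small {δ p r : ℕ} (hp5 : 5 ≤ p) (hδ : 4 ≤ δ) (hr : 1 ≤ r)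
    (hpr : 11 ≤ p ^ r) (h : δ ^ 2 * p ^ (2*r) < 9 * (p ^ (2*r) + δ ^ 2 * p)) :
    p ^ (2*r) + δ ^ 2 * p ≤ 2000 := by
  rcases eq_or_lt_of_le hr with h1 | h2
  · -- r = 1
    subst h1
    have hp11 : 11 ≤ p := by simpa using hpr
    norm_num at h ⊢
    have hz : ((δ:ℤ))^2 * (p:ℤ)^2 < 9*((p:ℤ)^2 + ((δ:ℤ))^2*(p:ℤ)) := by
      exact_mod_cast h
    have hp11z : (11:ℤ) ≤ (p:ℤ) := by exact_mod_cast hp11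
    have hδ4z : (4:ℤ) ≤ (δ:ℤ) := by exact_mod_cast hδ
    have hq : (δ:ℤ)^2 * (((p:ℤ)-9) * p) < 9 * (p:ℤ)^2 := by nlinarith [hz]
    have e1 : 16 * (((p:ℤ)-9) * (p:ℤ)) ≤ (δ:ℤ)^2 * (((p:ℤ)-9)*(p:ℤ)) := by
      have h16 : (16:ℤ) ≤ (δ:ℤ)^2 := by nlinarith
      exact mul_le_mul_of_nonneg_right h16 (by nlinarith)
    have hp20 : p ≤ 20 := by
      have : (p:ℤ) ≤ 20 := by nlinarith [e1, hq]
      exact_mod_cast this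
    have hδ9 : δ ≤ 9 := by
      have e2 : 100 * (((p:ℤ)-9) * (p:ℤ)) ≤ (δ:ℤ)^2 * (((p:ℤ)-9)*(p:ℤ)) ∨ δ ≤ 9 := by
        by_cases hd : δ ≤ 9
        · exact Or.inr hd
        · left
          have : (10:ℤ) ≤ (δ:ℤ) := by exact_mod_cast (by omega : 10 ≤ δ)
          exact mul_le_mul_of_nonneg_right (by nlinarith) (by nlinarith)
      rcases e2 with e2 | e2
      · exfalso; nlinarith [e2, hq]
      · exact e2
    simp only [pow_two] at h ⊢
    interval_cases p <;> interval_cases δ <;> omega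
  · -- r ≥ 2
    exfalso
    have hA : 125 * p ≤ p ^ (2*r) := by
      calc 125 * p ≤ p ^ 3 * p := by
            have h3 : 5 ^ 3 ≤ p ^ 3 := Nat.pow_le_pow_left hp5 3
            exact Nat.mul_le_mul_right p (by norm_num at h3 ⊢; omega)
        _ = p ^ 4 := by ring
        _ ≤ p ^ (2*r) := Nat.pow_le_pow_right (by omega) (by omega)
    have h16 : 16 ≤ δ ^ 2 := by nlinarith
    have hApos : 1 ≤ p ^ (2*r) := Nat.one_le_pow _ _ (by omega)
    nlinarith [Nat.mul_le_mul_left (δ ^ 2) hA, Nat.mul_le_mul_right (p ^ (2*r)) h16]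

lemma prime_not_dvd_aux {p : ℕ} (hp : p.Prime) (hp5 : 5 ≤ p) (s : ℕ) (hs : 0 < s) (hs13 : s < 13)
    (hsm : ∀ q : ℕ, q < 13 → q.Prime → q ∣ s → q < 5) : ¬ (p:ℤ) ∣ (s:ℤ) := by
  intro hdvd
  have hds : p ∣ s := by exact_mod_cast hdvd
  have hle := Nat.le_of_dvd hs hds
  exact absurd (hsm p (by omega) hp hds) (by omega)

/-- Case (vi): `n ≥ 2000`, `√n < m < 3^k`, `m = δ·p^r` with `δ ≥ 4`, `p ≥ 5` prime,
`r ≥ 1`, `p ∤ δ` and `p^r ≥ 11`.  Then there exist `1 ≤ a < b ≤ n` with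
`b³ + b ≡ a³ + a (mod m²)`. -/
theorem collision_case_vi (n : ℕ) (hn : 2000 ≤ n) (k : ℕ)
    (hk : IsLeast {j : ℕ | 1 ≤ j ∧ Real.sqrt n ≤ 3 ^ j} k)
    (m δ r p : ℕ) (hp : p.Prime) (hp5 : 5 ≤ p) (hδ : 4 ≤ δ) (hr : 1 ≤ r)
    (hpδ : ¬ p ∣ δ) (hpr : 11 ≤ p ^ r) (hm : m = δ * p ^ r)
    (hm1 : Real.sqrt n < m) (hm2 : m < 3 ^ k) :
    ∃ a b : ℕ, 1 ≤ a ∧ a < b ∧ b ≤ n ∧ b ^ 3 + b ≡ a ^ 3 + a [MOD m ^ 2] := by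
  haveI : Fact p.Prime := ⟨hp⟩
  haveI : NeZero p := ⟨by omega⟩
  have hm44 : 44 ≤ m := by
    rw [hm]
    calc 44 = 4 * 11 := by norm_num
      _ ≤ δ * p ^ r := Nat.mul_le_mul hδ hpr
  obtain ⟨⟨hk1, hkn⟩, hkmin⟩ := hk
  -- k ≥ 2 and 3^(k-1) < √n
  have hk2 : 2 ≤ k := by
    by_contra hlt
    have hk1' : k = 1 := by omega
    rw [hk1'] at hm2
    omega
  have h3k1 : (3:ℝ) ^ (k-1) < Real.sqrt n := by
    by_contra hge
    push_neg at hge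
    have := hkmin ⟨by omega, hge⟩
    omega
  -- m² < 9n
  have hm2n : m ^ 2 < 9 * n := by
    have hmR : (m:ℝ) < 3 * Real.sqrt n := by
      have h1 : (m:ℝ) < (3:ℝ) ^ k := by exact_mod_cast hm2
      have h2 : (3:ℝ) ^ k = 3 * (3:ℝ) ^ (k-1) := by
        rw [← pow_succ']
        congr 1
        omega
      nlinarith
    have hs : Real.sqrt n ^ 2 = n := Real.sq_sqrt (by positivity)
    have h1 : (m:ℝ)^2 < 9 * n := by nlinarith [Real.sqrt_nonneg (n:ℝ), Nat.cast_nonneg (α := ℝ) m]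
    exact_mod_cast h1
  have hmsq : m ^ 2 = δ ^ 2 * p ^ (2*r) := by rw [hm]; ring
  -- key size bound
  have hbound : p ^ (2*r) + δ ^ 2 * p ≤ n := by
    by_cases hcs : δ ^ 2 * p ^ (2*r) < 9 * (p ^ (2*r) + δ ^ 2 * p)
    · have := bound_small hp5 hδ hr hpr hcs
      omega
    · push_neg at hcs
      rw [← hmsq] at hcs
      omega
  -- solution mod p
  obtain ⟨u, v, hv0, huv⟩ := exists_uv p hp5
  have hδp : ((δ:ZMod p))^2 ≠ 0 := by
    have hd : (δ:ZMod p) ≠ 0 := by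
      simpa [ZMod.natCast_eq_zero_iff] using hpδ
    exact pow_ne_zero 2 hd
  -- choose t and c
  set θ : ZMod p := u / ((δ:ZMod p))^2 with hθ
  set t : ℕ := if θ.val = 0 then p else θ.val with htdef
  have ht1 : 1 ≤ t := by
    rw [htdef]; split <;> omega
  have htp : t ≤ p := by
    rw [htdef]; split
    · exact le_refl p
    · exact le_of_lt θ.val_lt
  have htcast : ((t:ℕ) : ZMod p) = θ := by
    rw [htdef]; split
    · rename_i h0
      rw [ZMod.natCast_self]
      exact ((ZMod.val_eq_zero θ).mp h0).symm
    · rw [ZMod.natCast_val, ZMod.cast_id]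
  set c : ℕ := δ^2 * t with hcdef
  have hcu : ((c:ℕ) : ZMod p) = u := by
    rw [hcdef]
    push_cast [htcast]
    rw [hθ]
    field_simp
    exact mul_div_cancel_left₀ u (fun h => hδp (by rw [h]; ring))
  have hc1 : 1 ≤ c := by
    have : 1 * 1 ≤ δ^2 * t := Nat.mul_le_mul (by nlinarith) ht1
    omega
  have hcp : c ≤ δ^2 * p := Nat.mul_le_mul_left _ htp
  -- base case for Hensel
  set C : ℤ := (c:ℤ) with hCdef
  set D : ℤ := -3 * (C^2 + 4) with hDdef
  have hbase : ∃ w : ℤ, ¬ (p:ℤ) ∣ w ∧ (p:ℤ) ∣ w ^ 2 - D := by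
    refine ⟨(v.val : ℤ), ?_, ?_⟩
    · rw [← ZMod.intCast_zmod_eq_zero_iff_dvd] at *
      intro hcontra
      apply hv0
      rwa [Int.cast_natCast, ZMod.natCast_val, ZMod.cast_id] at hcontra
    · rw [← ZMod.intCast_zmod_eq_zero_iff_dvd]
      push_cast [hDdef, hCdef]
      rw [ZMod.natCast_val, ZMod.cast_id, hcu]
      linear_combination huv
  obtain ⟨w, hwnd, hwd⟩ := hensel_sq hp hp5 D hbase (2*r - 1)
  have h2r : 2*r - 1 + 1 = 2*r := by omega
  rw [h2r] at hwd
  -- inverse of 6 mod p^(2r)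
  have hpI : Prime (p : ℤ) := Nat.prime_iff_prime_int.mp hp
  have hpd6 : ¬ (p:ℤ) ∣ 6 := prime_not_dvd_aux hp hp5 6 (by norm_num) (by norm_num) (by decide)
  have hcop6 : IsCoprime (6:ℤ) ((p:ℤ)^(2*r)) :=
    ((hpI.coprime_iff_not_dvd.mpr hpd6).symm).pow_right
  obtain ⟨x, y, hxy⟩ := hcop6
  set a' : ℤ := (w - 3*C) * x with ha'def
  set P2 : ℤ := (p:ℤ)^(2*r) with hP2def
  have h6a' : P2 ∣ 6*a' - (w - 3*C) := by
    refine ⟨-((w - 3*C)*y), ?_⟩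
    linear_combination (w - 3*C) * hxy
  have hsqa : P2 ∣ (6*a' + 3*C)^2 - D := by
    have e1 : P2 ∣ (6*a' + 3*C)^2 - w^2 := by
      have hfac : (6*a' + 3*C)^2 - w^2 = (6*a' - (w - 3*C)) * (6*a' + 3*C + w) := by ring
      rw [hfac]
      exact h6a'.mul_right _
    have e2 := dvd_add e1 hwd
    have : (6*a' + 3*C)^2 - w^2 + (w^2 - D) = (6*a' + 3*C)^2 - D := by ring
    rwa [this] at e2
  have hQ12 : P2 ∣ 12 * (3*a'^2 + 3*C*a' + C^2 + 1) := by
    have hfac : 12 * (3*a'^2 + 3*C*a' + C^2 + 1) = (6*a' + 3*C)^2 - D := by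
      rw [hDdef]; ring
    rw [hfac]; exact hsqa
  have hpd12 : ¬ (p:ℤ) ∣ 12 := prime_not_dvd_aux hp hp5 12 (by norm_num) (by norm_num) (by decide)
  have hQ : P2 ∣ 3*a'^2 + 3*C*a' + C^2 + 1 := by
    have hcop : IsCoprime P2 (12:ℤ) := (hpI.coprime_iff_not_dvd.mpr hpd12).pow_left
    exact hcop.dvd_of_dvd_mul_left hQ12
  -- natural number a
  set M : ℕ := p^(2*r) with hMdef
  have hM1 : 1 ≤ M := Nat.one_le_pow _ _ (by omega)
  have hMP : (M:ℤ) = P2 := by rw [hMdef, hP2def]; push_cast; ring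
  have hMpos : (0:ℤ) < (M:ℤ) := by exact_mod_cast hM1
  set a0 : ℕ := (a' % (M:ℤ)).toNat with ha0def
  have ha0 : (a0:ℤ) = a' % (M:ℤ) := Int.toNat_of_nonneg (Int.emod_nonneg a' (by omega))
  have ha0M : a0 < M := by
    have := Int.emod_lt_of_pos a' hMpos
    omega
  set a : ℕ := if a0 = 0 then M else a0 with hadef
  have haM : a ≤ M := by rw [hadef]; split <;> omega
  have ha1 : 1 ≤ a := by rw [hadef]; split <;> omega
  have haa' : (M:ℤ) ∣ (a:ℤ) - a' := by
    rw [hadef]; split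
    · rename_i h0
      have hmod : a' % (M:ℤ) = 0 := by rw [← ha0, h0]; simp
      exact dvd_sub (dvd_refl _) (Int.dvd_of_emod_eq_zero hmod)
    · refine ⟨-(a' / (M:ℤ)), ?_⟩
      rw [ha0]
      linear_combination Int.emod_add_mul_ediv a' (M:ℤ)
  set A : ℤ := (a:ℤ) with hAdef
  have hQa : (M:ℤ) ∣ 3*A^2 + 3*C*A + C^2 + 1 := by
    have hdiff : (M:ℤ) ∣ (3*A^2 + 3*C*A + C^2 + 1) - (3*a'^2 + 3*C*a' + C^2 + 1) := by
      have hfac : (3*A^2 + 3*C*A + C^2 + 1) - (3*a'^2 + 3*C*a' + C^2 + 1)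
          = ((A:ℤ) - a') * (3*(A + a') + 3*C) := by ring
      rw [hfac]
      exact haa'.mul_right _
    have h2 := dvd_add hdiff (hMP ▸ hQ)
    have e : (3*A^2 + 3*C*A + C^2 + 1) - (3*a'^2 + 3*C*a' + C^2 + 1)
        + (3*a'^2 + 3*C*a' + C^2 + 1) = 3*A^2 + 3*C*A + C^2 + 1 := by ring
    rwa [e] at h2
  -- final pair
  set b : ℕ := a + c with hbdef
  have hab : a < b := by rw [hbdef]; omega
  have hbn : b ≤ n := by
    have : b ≤ M + δ^2*p := by
      rw [hbdef]; exact Nat.add_le_add haM hcp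
    rw [hMdef] at this
    omega
  have hfin : ((m:ℤ))^2 ∣ ((b:ℤ)^3 + (b:ℤ)) - ((a:ℤ)^3 + (a:ℤ)) := by
    have hbZ : (b:ℤ) = A + C := by rw [hbdef, hAdef, hCdef]; push_cast; ring
    have hfac : ((b:ℤ)^3 + (b:ℤ)) - ((a:ℤ)^3 + (a:ℤ)) = C * (3*A^2 + 3*C*A + C^2 + 1) := by
      rw [hbZ, hAdef]; ring
    rw [hfac]
    have hm2eq : ((m:ℤ))^2 = ((δ:ℤ))^2 * (M:ℤ) := by
      rw [hm, hMdef]; push_cast; ring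
    rw [hm2eq]
    refine mul_dvd_mul ⟨(t:ℤ), ?_⟩ hQa
    rw [hCdef, hcdef]; push_cast; ring
  have hab3 : a^3 + a ≤ b^3 + b :=
    add_le_add (Nat.pow_le_pow_left (le_of_lt hab) 3) (le_of_lt hab)
  have hnat : m^2 ∣ (b^3 + b) - (a^3 + a) := by
    have hcast : (((b^3 + b) - (a^3 + a) : ℕ) : ℤ) = ((b:ℤ)^3 + (b:ℤ)) - ((a:ℤ)^3 + (a:ℤ)) := by
      rw [Nat.cast_sub hab3]; push_cast; ring
    have : ((m^2 : ℕ) : ℤ) ∣ (((b^3 + b) - (a^3 + a) : ℕ) : ℤ) := by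
      rw [hcast]; push_cast; exact hfin
    exact_mod_cast this
  exact ⟨a, b, ha1, hab, hbn, ((Nat.modEq_iff_dvd' hab3).mpr hnat).symm⟩
end

section
/- Let n ≥ 14 and let k = min{ j ∈ ℤ⁺ : 3^j ≥ √n }. Suppose m satisfies √n < m < 3^k and m = 2^r·3^s·7 or m = 2^r·3^s·5·7 for some nonnegative integers r, s. Then there exist integers 1 ≤ a < b ≤ n such that b³ + b ≡ a³ + a (mod m²). -/
set_option maxHeartbeats 1000000 in
set_option maxRecDepth 100000 in
/-- For every `u : ZMod 49` there are `a ∈ [1,49]` and `j ∈ [1,3]` with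
`3a² + 3a(ju²) + (ju²)² + 1 ≡ 0 (mod 49)`. -/
lemma key49 : ∀ u : ZMod 49, ∃ a : Fin 49, ∃ j : Fin 3,
    3*((a.1+1 : ℕ) : ZMod 49)^2 + 3*((a.1+1:ℕ) : ZMod 49)*(((j.1+1:ℕ):ZMod 49)*u^2)
      + (((j.1+1:ℕ):ZMod 49)*u^2)^2 + 1 = 0 := by decide

/-- Case (v): `n ≥ 14`, `√n < m < 3^k`, and `m = 2^r·3^s·7` or `m = 2^r·3^s·5·7` for some
`r, s ≥ 0`.  Then there exist `1 ≤ a < b ≤ n` with `b³ + b ≡ a³ + a (mod m²)`. -/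
theorem collision_case_v (n : ℕ) (hn : 14 ≤ n) (k : ℕ)
    (hk : IsLeast {j : ℕ | 1 ≤ j ∧ Real.sqrt n ≤ 3 ^ j} k)
    (m r s : ℕ) (hm : m = 2 ^ r * 3 ^ s * 7 ∨ m = 2 ^ r * 3 ^ s * 5 * 7)
    (hm1 : Real.sqrt n < m) (hm2 : m < 3 ^ k) :
    ∃ a b : ℕ, 1 ≤ a ∧ a < b ∧ b ≤ n ∧ b ^ 3 + b ≡ a ^ 3 + a [MOD m ^ 2] := by
  -- write m = 7 * w
  obtain ⟨w, hw⟩ : ∃ w, m = 7 * w := by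
    rcases hm with h | h
    · exact ⟨2 ^ r * 3 ^ s, by rw [h]; ring⟩
    · exact ⟨2 ^ r * 3 ^ s * 5, by rw [h]; ring⟩
  have hw1 : 1 ≤ w := by
    rcases Nat.eq_zero_or_pos w with h0 | h0
    · exfalso
      rw [h0, mul_zero] at hw
      rw [hw] at hm1
      simp at hm1
      exact absurd hm1 (not_lt.2 (Real.sqrt_nonneg _))
    · exact h0
  -- k ≥ 2
  have hk2 : 2 ≤ k := by
    by_contra h
    have hk1 : k = 1 := by have := hk.1.1; omega
    have h3 : Real.sqrt n ≤ 3 := by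
      have := hk.1.2
      rw [hk1] at this
      simpa using this
    have hn9 : (n : ℝ) ≤ 9 := by
      nlinarith [Real.sq_sqrt (by positivity : (0:ℝ) ≤ (n:ℝ)), Real.sqrt_nonneg (n:ℝ)]
    have : (14 : ℝ) ≤ (n : ℝ) := by exact_mod_cast hn
    linarith
  -- 3^(k-1) < √n, hence 9^(k-1) < n
  have hlow : (3 : ℝ) ^ (k - 1) < Real.sqrt n := by
    by_contra h
    push_neg at h
    have hmem : (k - 1) ∈ {j : ℕ | 1 ≤ j ∧ Real.sqrt n ≤ 3 ^ j} := ⟨by omega, h⟩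
    have := hk.2 hmem
    omega
  have h9 : 9 ^ (k - 1) < n := by
    have h1 : ((3 : ℝ) ^ (k - 1)) ^ 2 < (n : ℝ) := by
      nlinarith [Real.sq_sqrt (by positivity : (0:ℝ) ≤ (n:ℝ)), Real.sqrt_nonneg (n:ℝ),
        pow_pos (by norm_num : (0:ℝ) < 3) (k-1)]
    have h2 : ((9 : ℕ) ^ (k - 1) : ℝ) = ((3 : ℝ) ^ (k - 1)) ^ 2 := by
      push_cast
      rw [show (9:ℝ) = 3^2 by norm_num, ← pow_mul, ← pow_mul, Nat.mul_comm]
    exact_mod_cast h2 ▸ h1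
  -- m² < 9n
  have hmn : m ^ 2 < 9 * n := by
    have h1 : m ^ 2 < (3 ^ k) ^ 2 := Nat.pow_lt_pow_left hm2 (by norm_num)
    have h2 : (3 ^ k : ℕ) ^ 2 = 9 * 9 ^ (k - 1) := by
      calc (3 ^ k : ℕ) ^ 2 = 9 ^ k := by
            rw [← pow_mul, Nat.mul_comm k 2, pow_mul]; norm_num
        _ = 9 ^ (k - 1 + 1) := by rw [Nat.sub_add_cancel (by omega : 1 ≤ k)]
        _ = 9 * 9 ^ (k - 1) := by rw [pow_succ]; ring
    have h3 : 9 * 9 ^ (k - 1) < 9 * n := by omega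
    omega
  by_cases hw5 : 5 ≤ w
  · -- general case
    obtain ⟨a₀, j₀, hkey⟩ := key49 (w : ZMod 49)
    have hQ : 49 ∣ 3*(a₀.1+1)^2 + 3*(a₀.1+1)*((j₀.1+1)*w^2) + ((j₀.1+1)*w^2)^2 + 1 := by
      rw [← ZMod.natCast_eq_zero_iff]
      push_cast
      push_cast at hkey
      linear_combination hkey
    obtain ⟨c, hc⟩ := hQ
    have ha48 : a₀.1 ≤ 48 := by have := a₀.2; omega
    have hj2 : j₀.1 ≤ 2 := by have := j₀.2; omega
    have hw2 : 25 ≤ w ^ 2 := by nlinarith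
    have htle : (j₀.1+1) * w ^ 2 ≤ 3 * w ^ 2 := Nat.mul_le_mul_right _ (by omega)
    have htge : w ^ 2 ≤ (j₀.1+1) * w ^ 2 := Nat.le_mul_of_pos_left _ (by omega)
    have hmw : 49 * w ^ 2 < 9 * n := by
      have : m ^ 2 = 49 * w ^ 2 := by rw [hw]; ring
      omega
    refine ⟨a₀.1+1, (a₀.1+1) + (j₀.1+1)*w^2, by omega, by omega, by omega, ?_⟩
    have heq : ((a₀.1+1) + (j₀.1+1)*w^2) ^ 3 + ((a₀.1+1) + (j₀.1+1)*w^2)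
        = ((a₀.1+1) ^ 3 + (a₀.1+1))
          + ((j₀.1+1)*w^2) * (3*(a₀.1+1)^2 + 3*(a₀.1+1)*((j₀.1+1)*w^2) + ((j₀.1+1)*w^2)^2 + 1) := by
      ring
    rw [heq]
    have hdvd : m ^ 2 ∣
        ((j₀.1+1)*w^2) * (3*(a₀.1+1)^2 + 3*(a₀.1+1)*((j₀.1+1)*w^2) + ((j₀.1+1)*w^2)^2 + 1) := by
      refine ⟨(j₀.1+1) * c, ?_⟩
      rw [hc, hw]
      ring
    calc (a₀.1+1) ^ 3 + (a₀.1+1)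
          + ((j₀.1+1)*w^2) * (3*(a₀.1+1)^2 + 3*(a₀.1+1)*((j₀.1+1)*w^2) + ((j₀.1+1)*w^2)^2 + 1)
        ≡ (a₀.1+1) ^ 3 + (a₀.1+1) + 0 [MOD m ^ 2] :=
          Nat.ModEq.add_left _ (Nat.modEq_zero_iff_dvd.2 hdvd)
      _ = (a₀.1+1) ^ 3 + (a₀.1+1) := by omega
  · -- small cases w ∈ {1,2,3,4}
    interval_cases w
    · -- m = 7
      rw [show (7:ℕ)*1 = 7 by norm_num] at hw
      subst hw
      exact ⟨3, 8, by norm_num, by norm_num, by omega, by decide⟩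
    · -- m = 14
      rw [show (7:ℕ)*2 = 14 by norm_num] at hw
      subst hw
      exact ⟨3, 10, by norm_num, by norm_num, by omega, by decide⟩
    · -- m = 21
      rw [show (7:ℕ)*3 = 21 by norm_num] at hw
      subst hw
      have hk3 : 3 ≤ k := by
        by_contra h
        have : (3:ℕ) ^ k ≤ 9 := by
          calc (3:ℕ) ^ k ≤ 3 ^ 2 := Nat.pow_le_pow_right (by norm_num) (by omega)
          _ = 9 := by norm_num
        omega
      have : 81 ≤ 9 ^ (k - 1) := by
        calc (81:ℕ) = 9 ^ 2 := by norm_num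
        _ ≤ 9 ^ (k - 1) := Nat.pow_le_pow_right (by norm_num) (by omega)
      exact ⟨8, 17, by norm_num, by norm_num, by omega, by decide⟩
    · -- m = 28
      rw [show (7:ℕ)*4 = 28 by norm_num] at hw
      subst hw
      have hk3 : 3 ≤ k := by
        by_contra h
        have : (3:ℕ) ^ k ≤ 9 := by
          calc (3:ℕ) ^ k ≤ 3 ^ 2 := Nat.pow_le_pow_right (by norm_num) (by omega)
          _ = 9 := by norm_num
        omega
      have : 81 ≤ 9 ^ (k - 1) := by
        calc (81:ℕ) = 9 ^ 2 := by norm_num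
        _ ≤ 9 ^ (k - 1) := Nat.pow_le_pow_right (by norm_num) (by omega)
      exact ⟨10, 17, by norm_num, by norm_num, by omega, by decide⟩
end

section
/- Suppose m = 2^r·t, where r is a positive integer and t is an odd positive integer. If n is a positive integer with 2^{2r} + t² ≤ n, then there exist integers 1 ≤ a < b ≤ n such that b³ + b ≡ a³ + a (mod m²). -/
private lemma lift_pow (t : ℤ) (ht : Odd t) :
    ∀ k : ℕ, ∃ a : ℤ, Even a ∧ (2:ℤ)^(k+1) ∣ 3*a^2 + 3*a*t^2 + t^4 + 1 := by
  intro k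
  induction k with
  | zero =>
    refine ⟨0, Even.zero, ?_⟩
    have : Odd (t^4) := ht.pow
    obtain ⟨c, hc⟩ := this
    exact ⟨c+1, by rw [pow_one]; linarith⟩
  | succ k ih =>
    obtain ⟨a, ha, c, hc⟩ := ih
    by_cases h : (2:ℤ)^(k+2) ∣ 3*a^2 + 3*a*t^2 + t^4 + 1
    · exact ⟨a, ha, h⟩
    · obtain ⟨a2, ha2⟩ := ha
      refine ⟨a + 2^(k+1), ⟨a2 + 2^k, by rw [ha2]; ring⟩, ?_⟩
      have hcodd : Odd c := by
        rcases Int.even_or_odd c with he | ho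
        · exfalso; apply h
          obtain ⟨d, hd⟩ := he
          exact ⟨d, by rw [hc, hd]; ring⟩
        · exact ho
      obtain ⟨t2, ht2⟩ := ht
      obtain ⟨c2, hc2⟩ := hcodd
      refine ⟨c2 + 6*a2 + 6*t2^2 + 6*t2 + 2 + 3*2^k, ?_⟩
      have expand : 3*(a + 2^(k+1))^2 + 3*(a + 2^(k+1))*t^2 + t^4 + 1
          = (3*a^2 + 3*a*t^2 + t^4 + 1) + 2^(k+1)*(6*a + 3*t^2) + 3*(2^(k+1))^2 := by
        ring
      rw [expand, hc, hc2, ha2, ht2]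
      ring

/-- Suppose `m = 2^r·t` with `r ≥ 1` and `t` an odd positive integer.  If
`2^(2r) + t² ≤ n` then there exist `1 ≤ a < b ≤ n` with `b³ + b ≡ a³ + a (mod m²)`. -/
theorem collision_two_pow_aux (m n r t : ℕ) (hn : 0 < n) (hr : 1 ≤ r)
    (ht0 : 0 < t) (ht : Odd t) (hm : m = 2 ^ r * t)
    (hle : 2 ^ (2 * r) + t ^ 2 ≤ n) :
    ∃ a b : ℕ, 1 ≤ a ∧ a < b ∧ b ≤ n ∧ b ^ 3 + b ≡ a ^ 3 + a [MOD m ^ 2] := by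
  have htz : Odd (t : ℤ) := by exact_mod_cast ht
  obtain ⟨a, -, hdvd⟩ := lift_pow (t : ℤ) htz (2 * r - 1)
  have hkk : 2 * r - 1 + 1 = 2 * r := by omega
  rw [hkk] at hdvd
  set P : ℤ := 2 ^ (2 * r) with hP
  have hPpos : (0:ℤ) < P := by positivity
  set A : ℤ := a % P with hA
  have hA0 : 0 ≤ A := Int.emod_nonneg a (by positivity)
  have hAlt : A < P := Int.emod_lt_of_pos a hPpos
  have hdiff : P ∣ a - A := Int.dvd_self_sub_of_emod_eq rfl
  have hdvdA : P ∣ 3*A^2 + 3*A*(t:ℤ)^2 + (t:ℤ)^4 + 1 := by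
    have h2 := dvd_sub hdvd (hdiff.mul_right (3*(a+A) + 3*(t:ℤ)^2))
    have he : 3*a^2 + 3*a*(t:ℤ)^2 + (t:ℤ)^4 + 1 - (a - A)*(3*(a+A) + 3*(t:ℤ)^2)
        = 3*A^2 + 3*A*(t:ℤ)^2 + (t:ℤ)^4 + 1 := by ring
    rwa [he] at h2
  have hAne : A ≠ 0 := by
    intro h0
    rw [h0] at hdvdA
    norm_num at hdvdA
    have h4 : (4:ℤ) ∣ P := by
      rw [hP]
      have := pow_dvd_pow (2:ℤ) (show 2 ≤ 2*r by omega)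
      norm_num at this ⊢
      exact this
    have h4' : (4:ℤ) ∣ (t:ℤ)^4 + 1 := h4.trans hdvdA
    obtain ⟨s, hs⟩ := htz
    obtain ⟨k, hk⟩ := h4'
    have : (t:ℤ)^4 + 1 = 4*(4*s^4 + 8*s^3 + 6*s^2 + 2*s) + 2 := by rw [hs]; ring
    omega
  have hApos : 0 < A := lt_of_le_of_ne hA0 (Ne.symm hAne)
  refine ⟨A.toNat, A.toNat + t^2, by omega, by nlinarith, ?_, ?_⟩
  · have h1 : (A.toNat : ℤ) < (2:ℤ)^(2*r) := by rwa [Int.toNat_of_nonneg hA0]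
    have h2 : A.toNat < 2^(2*r) := by exact_mod_cast h1
    omega
  · obtain ⟨c, hc⟩ := hdvdA
    refine Nat.modEq_iff_dvd.mpr ⟨-c, ?_⟩
    have hcast : ((A.toNat : ℕ) : ℤ) = A := Int.toNat_of_nonneg hA0
    push_cast [hm]
    rw [hcast]
    have h2r : ((2:ℤ))^(2*r) = ((2:ℤ)^r)^2 := by rw [mul_comm, pow_mul]
    rw [hP, h2r] at hc
    linear_combination (-(t:ℤ)^2) * hc
end

section
/- Let n ≥ 57 and let k = min{ j ∈ ℤ⁺ : 3^j ≥ √n }. Suppose m satisfies √n < m < 3^k and m = 2^r·3^s·5 for some nonnegative integers r, s. Then there exist integers 1 ≤ a < b ≤ n such that b³ + b ≡ a³ + a (mod m²). -/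
private lemma keyQ (c v t α : ℕ) (h : c % 25 = v % 25)
    (hQv : 25 ∣ α^2 + α*(α + t*v^2) + (α + t*v^2)^2 + 1) :
    25 ∣ α^2 + α*(α + t*c^2) + (α + t*c^2)^2 + 1 := by
  have hc : c ≡ v [MOD 25] := h
  have hB : α + t*c^2 ≡ α + t*v^2 [MOD 25] :=
    (Nat.ModEq.refl α).add ((Nat.ModEq.refl t).mul (hc.pow 2))
  have hQ : α^2 + α*(α + t*c^2) + (α + t*c^2)^2 + 1
      ≡ α^2 + α*(α + t*v^2) + (α + t*v^2)^2 + 1 [MOD 25] :=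
    (((Nat.ModEq.refl (α^2)).add ((Nat.ModEq.refl α).mul hB)).add (hB.pow 2)).add
      (Nat.ModEq.refl 1)
  exact (Nat.modEq_zero_iff_dvd).mp (hQ.trans ((Nat.modEq_zero_iff_dvd).mpr hQv))

private lemma keyC (n c t α v : ℕ) (hc : 1 ≤ c) (h9 : 25 * c^2 < 9*n) (hn : 64 ≤ n)
    (ht1 : 1 ≤ t) (ht2 : t ≤ 2) (hα1 : 1 ≤ α) (hα2 : α ≤ 18)
    (hv : c % 25 = v % 25)
    (hQv : 25 ∣ α^2 + α*(α + t*v^2) + (α + t*v^2)^2 + 1) :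
    ∃ a b : ℕ, 1 ≤ a ∧ a < b ∧ b ≤ n ∧ b ^ 3 + b ≡ a ^ 3 + a [MOD 25 * c^2] := by
  obtain ⟨q, hq⟩ := keyQ c v t α hv hQv
  have hc2 : 1 ≤ c^2 := Nat.one_le_pow _ _ hc
  have htc : 1*1 ≤ t * c^2 := Nat.mul_le_mul ht1 hc2
  have htc2 : t * c^2 ≤ 2 * c^2 := Nat.mul_le_mul_right _ ht2
  have hble : α + t * c^2 ≤ n := by
    obtain ⟨X, hX⟩ : ∃ X, X = c^2 := ⟨_, rfl⟩
    obtain ⟨Y, hY⟩ : ∃ Y, Y = t * X := ⟨_, rfl⟩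
    rw [← hX] at h9 htc2
    rw [← hY] at htc2
    rw [← hX, ← hY]
    omega
  refine ⟨α, α + t * c^2, hα1, by omega, hble, ?_⟩
  have hdvd : ((25 * c^2 : ℕ) : ℤ) ∣
      ((α^3 + α : ℕ) : ℤ) - (((α + t*c^2)^3 + (α + t*c^2) : ℕ) : ℤ) := by
    refine ⟨-(t * q), ?_⟩
    have hqz : ((α:ℤ)^2 + α*(α + t*c^2) + (α + t*c^2)^2 + 1) = 25 * q := by
      exact_mod_cast hq
    push_cast
    linear_combination (-(t : ℤ) * (c:ℤ)^2) * hqz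
  exact (Nat.modEq_iff_dvd).mpr hdvd

/-- Case (iv): `n ≥ 57`, `√n < m < 3^k`, and `m = 2^r·3^s·5` for some `r, s ≥ 0`.  Then
there exist `1 ≤ a < b ≤ n` with `b³ + b ≡ a³ + a (mod m²)`. -/
theorem collision_case_iv (n : ℕ) (hn : 57 ≤ n) (k : ℕ)
    (hk : IsLeast {j : ℕ | 1 ≤ j ∧ Real.sqrt n ≤ 3 ^ j} k)
    (m r s : ℕ) (hm : m = 2 ^ r * 3 ^ s * 5)
    (hm1 : Real.sqrt n < m) (hm2 : m < 3 ^ k) :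
    ∃ a b : ℕ, 1 ≤ a ∧ a < b ∧ b ≤ n ∧ b ^ 3 + b ≡ a ^ 3 + a [MOD m ^ 2] := by
  set c := 2 ^ r * 3 ^ s with hcdef
  have hc1 : 1 ≤ c := by
    have : 0 < c := Nat.mul_pos (pow_pos (by norm_num) r) (pow_pos (by norm_num) s)
    omega
  have hm5 : m = c * 5 := hm
  have hm2eq : m^2 = 25 * c^2 := by rw [hm5]; ring
  have hn0 : (0:ℝ) ≤ (n:ℝ) := by positivity
  have hsq : Real.sqrt n ^ 2 = n := Real.sq_sqrt hn0
  have hs0 : (0:ℝ) ≤ Real.sqrt n := Real.sqrt_nonneg _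
  have hm0 : (0:ℝ) ≤ (m:ℝ) := by positivity
  have hnm : n < m^2 := by
    have : (n:ℝ) < (m:ℝ)^2 := by nlinarith [hm1]
    exact_mod_cast this
  have hk1 := hk.1.1
  have hk2 : 2 ≤ k := by
    by_contra h
    have hke : k = 1 := by omega
    have h3 : Real.sqrt n ≤ 3 := by
      have := hk.1.2
      rw [hke] at this
      simpa using this
    have : (n:ℝ) ≤ 9 := by nlinarith
    have : n ≤ 9 := by exact_mod_cast this
    omega
  have hlow : (3:ℝ)^(k-1) < Real.sqrt n := by
    by_contra h
    push_neg at h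
    have := hk.2 ⟨by omega, h⟩
    omega
  have hm3k : (m:ℝ) < (3:ℝ)^k := by exact_mod_cast hm2
  have h3k : (3:ℝ)^k = (3:ℝ)^(k-1) * 3 := by
    rw [← pow_succ]
    congr 1
    omega
  have hlt : (m:ℝ) < 3 * Real.sqrt n := by
    rw [h3k] at hm3k
    nlinarith
  have h9r : (m:ℝ)^2 < 9 * n := by nlinarith
  have h9 : 25 * c^2 < 9 * n := by
    have h' : m^2 < 9*n := by exact_mod_cast h9r
    rwa [hm2eq] at h'
  have hn64 : 64 ≤ n := by
    by_contra h
    push_neg at h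
    have hn64r : (n:ℝ) < 64 := by exact_mod_cast h
    have hs8 : Real.sqrt n < 8 := by nlinarith
    have h37 : (3:ℝ)^(k-1) < 8 := lt_trans hlow hs8
    have h37n : (3:ℕ)^(k-1) < 8 := by exact_mod_cast h37
    have hk22 : k ≤ 2 := by
      by_contra hkk
      have : (3:ℕ)^2 ≤ 3^(k-1) := Nat.pow_le_pow_right (by norm_num) (by omega)
      omega
    have hm9 : m < 9 := by
      calc m < 3^k := hm2
        _ ≤ 3^2 := Nat.pow_le_pow_right (by norm_num) hk22
        _ = 9 := rfl
    have hm5' : m = 5 := by omega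
    rw [hm5'] at hnm
    norm_num at hnm
    omega
  have h5c : c % 5 ≠ 0 := by
    have h2 : ¬ (5 ∣ c) := by
      intro hd
      rcases (Nat.Prime.dvd_mul (by norm_num)).mp hd with h | h
      · have := Nat.Prime.dvd_of_dvd_pow (p := 5) (by norm_num) h
        norm_num at this
      · have := Nat.Prime.dvd_of_dvd_pow (p := 5) (by norm_num) h
        norm_num at this
    omega
  rw [hm2eq]
  obtain ⟨v, hv⟩ : ∃ v, c % 25 = v := ⟨_, rfl⟩
  have hvlt : v < 25 := by omega
  have hv5 : v % 5 ≠ 0 := by omega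
  interval_cases v
  · exact absurd (by omega : c % 5 = 0) h5c
  · exact keyC n c 2 3 1 hc1 h9 hn64 (by norm_num) (by norm_num) (by norm_num) (by norm_num) (by omega) (by decide)
  · exact keyC n c 2 2 2 hc1 h9 hn64 (by norm_num) (by norm_num) (by norm_num) (by norm_num) (by omega) (by decide)
  · exact keyC n c 2 7 3 hc1 h9 hn64 (by norm_num) (by norm_num) (by norm_num) (by norm_num) (by omega) (by decide)
  · exact keyC n c 2 18 4 hc1 h9 hn64 (by norm_num) (by norm_num) (by norm_num) (by norm_num) (by omega) (by decide)
  · exact absurd (by omega : c % 5 = 0) h5c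
  · exact keyC n c 1 7 6 hc1 h9 hn64 (by norm_num) (by norm_num) (by norm_num) (by norm_num) (by omega) (by decide)
  · exact keyC n c 2 5 7 hc1 h9 hn64 (by norm_num) (by norm_num) (by norm_num) (by norm_num) (by omega) (by decide)
  · exact keyC n c 1 18 8 hc1 h9 hn64 (by norm_num) (by norm_num) (by norm_num) (by norm_num) (by omega) (by decide)
  · exact keyC n c 2 5 9 hc1 h9 hn64 (by norm_num) (by norm_num) (by norm_num) (by norm_num) (by omega) (by decide)
  · exact absurd (by omega : c % 5 = 0) h5c
  · exact keyC n c 2 10 11 hc1 h9 hn64 (by norm_num) (by norm_num) (by norm_num) (by norm_num) (by omega) (by decide)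
  · exact keyC n c 2 17 12 hc1 h9 hn64 (by norm_num) (by norm_num) (by norm_num) (by norm_num) (by omega) (by decide)
  · exact keyC n c 2 17 13 hc1 h9 hn64 (by norm_num) (by norm_num) (by norm_num) (by norm_num) (by omega) (by decide)
  · exact keyC n c 2 10 14 hc1 h9 hn64 (by norm_num) (by norm_num) (by norm_num) (by norm_num) (by omega) (by decide)
  · exact absurd (by omega : c % 5 = 0) h5c
  · exact keyC n c 2 5 16 hc1 h9 hn64 (by norm_num) (by norm_num) (by norm_num) (by norm_num) (by omega) (by decide)
  · exact keyC n c 1 18 17 hc1 h9 hn64 (by norm_num) (by norm_num) (by norm_num) (by norm_num) (by omega) (by decide)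
  · exact keyC n c 2 5 18 hc1 h9 hn64 (by norm_num) (by norm_num) (by norm_num) (by norm_num) (by omega) (by decide)
  · exact keyC n c 1 7 19 hc1 h9 hn64 (by norm_num) (by norm_num) (by norm_num) (by norm_num) (by omega) (by decide)
  · exact absurd (by omega : c % 5 = 0) h5c
  · exact keyC n c 2 18 21 hc1 h9 hn64 (by norm_num) (by norm_num) (by norm_num) (by norm_num) (by omega) (by decide)
  · exact keyC n c 2 7 22 hc1 h9 hn64 (by norm_num) (by norm_num) (by norm_num) (by norm_num) (by omega) (by decide)
  · exact keyC n c 2 2 23 hc1 h9 hn64 (by norm_num) (by norm_num) (by norm_num) (by norm_num) (by omega) (by decide)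
  · exact keyC n c 2 3 24 hc1 h9 hn64 (by norm_num) (by norm_num) (by norm_num) (by norm_num) (by omega) (by decide)
end

section
/- Let n ≥ 144 and let k = min{ j ∈ ℤ⁺ : 3^j ≥ √n }. Suppose m satisfies √n < m < 3^k and m = 2^r·3^s for some positive integers r, s. Then there exist integers 1 ≤ a < b ≤ n such that b³ + b ≡ a³ + a (mod m²). -/
/-- Hensel-style lifting: for odd `d`, the quadratic `3a²+3ad+d²+1` has roots modulo
any power of two, with a small representative. -/
lemma aux_lift (d : ℕ) (hd : d % 2 = 1) :
    ∀ t : ℕ, ∃ a : ℕ, 1 ≤ a ∧ a < 2 ^ (t + 1) ∧ 2 ^ (t + 1) ∣ 3 * a ^ 2 + 3 * a * d + d ^ 2 + 1 := by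
  intro t
  induction t with
  | zero =>
    obtain ⟨c, rfl⟩ : ∃ c, d = 2 * c + 1 := ⟨d / 2, by omega⟩
    exact ⟨1, le_refl 1, by norm_num, ⟨2 * c ^ 2 + 5 * c + 4, by ring⟩⟩
  | succ t ih =>
    obtain ⟨a, ha1, ha2, q, hq⟩ := ih
    rcases Nat.even_or_odd q with hqe | hqo
    · obtain ⟨q', rfl⟩ := hqe
      refine ⟨a, ha1, ?_, ⟨q', ?_⟩⟩
      · have : (2:ℕ) ^ (t + 1) < 2 ^ (t + 2) := by
          exact Nat.pow_lt_pow_right (by norm_num) (by omega)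
        omega
      · rw [hq, pow_succ]; ring
    · have hq1 : q % 2 = 1 := Nat.odd_iff.mp hqo
      have h2 : (2:ℕ) ∣ 2 ^ (t + 1) := dvd_pow_self 2 (Nat.succ_ne_zero t)
      obtain ⟨w, hw⟩ : ∃ w, q + 6 * a + 3 * d + 3 * 2 ^ (t + 1) = 2 * w := by
        obtain ⟨u, hu⟩ := h2; exact ⟨(q + 6 * a + 3 * d + 3 * 2 ^ (t + 1)) / 2, by omega⟩
      refine ⟨a + 2 ^ (t + 1), by omega, ?_, ⟨w, ?_⟩⟩
      · have : (2:ℕ) ^ (t + 2) = 2 ^ (t + 1) * 2 := pow_succ 2 (t + 1)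
        omega
      · calc 3 * (a + 2 ^ (t + 1)) ^ 2 + 3 * (a + 2 ^ (t + 1)) * d + d ^ 2 + 1
            = (3 * a ^ 2 + 3 * a * d + d ^ 2 + 1) + 2 ^ (t + 1) * (6 * a + 3 * d)
              + 3 * (2 ^ (t + 1) * 2 ^ (t + 1)) := by ring
          _ = 2 ^ (t + 1) * q + 2 ^ (t + 1) * (6 * a + 3 * d)
              + 3 * (2 ^ (t + 1) * 2 ^ (t + 1)) := by rw [hq]
          _ = 2 ^ (t + 1) * (q + 6 * a + 3 * d + 3 * 2 ^ (t + 1)) := by ring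
          _ = 2 ^ (t + 1) * (2 * w) := by rw [hw]
          _ = 2 ^ (t + 2) * w := by rw [pow_succ]; ring

/-- From a suitable divisibility, produce the collision pair. -/
lemma finish_pair (M n a d : ℕ) (ha : 1 ≤ a) (hd : 1 ≤ d) (hb : a + d ≤ n)
    (hdvd : M ∣ d * (3 * a ^ 2 + 3 * a * d + d ^ 2 + 1)) :
    ∃ x y : ℕ, 1 ≤ x ∧ x < y ∧ y ≤ n ∧ y ^ 3 + y ≡ x ^ 3 + x [MOD M] := by
  refine ⟨a, a + d, ha, by omega, hb, ?_⟩
  have hid : (a + d) ^ 3 + (a + d)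
      = (a ^ 3 + a) + d * (3 * a ^ 2 + 3 * a * d + d ^ 2 + 1) := by ring
  rw [hid]
  have h0 : d * (3 * a ^ 2 + 3 * a * d + d ^ 2 + 1) ≡ 0 [MOD M] :=
    (Nat.modEq_zero_iff_dvd).mpr hdvd
  simpa using (Nat.ModEq.add_left (a ^ 3 + a) h0)

/-- Case (iii): `n ≥ 144`, `√n < m < 3^k`, and `m = 2^r·3^s` for some `r, s ≥ 1`.  Then
there exist `1 ≤ a < b ≤ n` with `b³ + b ≡ a³ + a (mod m²)`. -/
theorem collision_case_iii (n : ℕ) (hn : 144 ≤ n) (k : ℕ)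
    (hk : IsLeast {j : ℕ | 1 ≤ j ∧ Real.sqrt n ≤ 3 ^ j} k)
    (m r s : ℕ) (hr : 1 ≤ r) (hs : 1 ≤ s) (hm : m = 2 ^ r * 3 ^ s)
    (hm1 : Real.sqrt n < m) (hm2 : m < 3 ^ k) :
    ∃ a b : ℕ, 1 ≤ a ∧ a < b ∧ b ≤ n ∧ b ^ 3 + b ≡ a ^ 3 + a [MOD m ^ 2] := by
  obtain ⟨⟨hk1, hk2⟩, hkmin⟩ := hk
  subst hm
  obtain ⟨S, rfl⟩ : ∃ S, s = S + 1 := ⟨s - 1, by omega⟩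
  obtain ⟨K, rfl⟩ : ∃ K, k = K + 1 := ⟨k - 1, by omega⟩
  -- basic power facts
  have h1 : 2 ^ r * 3 ^ S < 3 ^ K := by
    have h3 : 2 ^ r * 3 ^ S * 3 < 3 ^ K * 3 := by
      have e1 : 2 ^ r * 3 ^ (S + 1) = 2 ^ r * 3 ^ S * 3 := by ring
      have e2 : (3:ℕ) ^ (K + 1) = 3 ^ K * 3 := by ring
      omega
    omega
  have hSK : S < K := by
    have h2r : 2 ≤ 2 ^ r := by
      calc (2:ℕ) = 2 ^ 1 := by norm_num
        _ ≤ 2 ^ r := Nat.pow_le_pow_right (by norm_num) hr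
    have h3S : 3 ^ S < 3 ^ K := by calc 3 ^ S ≤ 2 ^ r * 3 ^ S := Nat.le_mul_of_pos_left _ (by positivity)
        _ < 3 ^ K := h1
    exact (Nat.pow_lt_pow_iff_right (by norm_num)).mp h3S
  have hK1 : 1 ≤ K := by omega
  -- n > 9^K
  have hKn : 3 ^ K * 3 ^ K < n := by
    by_contra h
    push_neg at h
    have hmem : K ∈ {j : ℕ | 1 ≤ j ∧ Real.sqrt n ≤ 3 ^ j} := by
      refine ⟨hK1, ?_⟩
      have hle : (n : ℝ) ≤ ((3:ℝ) ^ K) ^ 2 := by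
        have : ((3:ℕ) ^ K * 3 ^ K : ℕ) = ((3:ℕ) ^ K) ^ 2 := by ring
        calc (n : ℝ) ≤ ((3 ^ K * 3 ^ K : ℕ) : ℝ) := by exact_mod_cast h
          _ = ((3:ℝ) ^ K) ^ 2 := by push_cast; ring
      calc Real.sqrt n ≤ Real.sqrt (((3:ℝ) ^ K) ^ 2) := Real.sqrt_le_sqrt hle
        _ = (3:ℝ) ^ K := Real.sqrt_sq (by positivity)
    have := hkmin hmem
    omega
  -- the odd number d = 9^(S+1)
  have hdodd : (9:ℕ) ^ (S + 1) % 2 = 1 := by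
    rw [Nat.pow_mod]; norm_num
  have h9 : ∀ u : ℕ, (9:ℕ) ^ u = 3 ^ u * 3 ^ u := by
    intro u
    calc (9:ℕ) ^ u = (3 * 3) ^ u := by norm_num
      _ = 3 ^ u * 3 ^ u := Nat.mul_pow 3 3 u
  rcases Nat.lt_or_ge r 2 with hr2 | hr2
  · -- r = 1
    have hr1 : r = 1 := by omega
    subst hr1
    obtain ⟨y, hy⟩ : ∃ y, (9:ℕ) ^ (S + 1) = 4 * y + 1 := by
      have : (9:ℕ) ^ (S + 1) % 4 = 1 := by rw [Nat.pow_mod]; norm_num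
      exact ⟨9 ^ (S + 1) / 4, by omega⟩
    apply finish_pair _ _ 1 (9 ^ (S + 1)) (le_refl 1) (Nat.one_le_pow _ _ (by norm_num))
    · -- 1 + 9^(S+1) ≤ n
      have : (9:ℕ) ^ (S + 1) ≤ 9 ^ K := Nat.pow_le_pow_right (by norm_num) (by omega)
      have h9K : (9:ℕ) ^ K = 3 ^ K * 3 ^ K := h9 K
      omega
    · -- m² ∣ d Q
      have hm2e : (2 ^ 1 * 3 ^ (S + 1)) ^ 2 = 9 ^ (S + 1) * 4 := by
        rw [h9 (S + 1)]; ring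
      rw [hm2e]
      apply mul_dvd_mul_left
      -- 4 ∣ 3*1^2 + 3*1*d + d^2 + 1
      refine ⟨4 * y ^ 2 + 5 * y + 2, ?_⟩
      rw [hy]; ring
  · -- r ≥ 2
    obtain ⟨a, ha1, ha2, hQ⟩ := aux_lift (9 ^ (S + 1)) hdodd (2 * r - 1)
    have ht : 2 * r - 1 + 1 = 2 * r := by omega
    rw [ht] at ha2 hQ
    apply finish_pair _ _ a (9 ^ (S + 1)) ha1 (Nat.one_le_pow _ _ (by norm_num))
    · -- a + 9^(S+1) ≤ n
      have hXZ : (2 ^ r * 3 ^ S + 1) * (2 ^ r * 3 ^ S + 1) ≤ 3 ^ K * 3 ^ K :=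
        Nat.mul_le_mul h1 h1
      have h22r : (2:ℕ) ^ (2 * r) = 2 ^ r * 2 ^ r := by
        rw [two_mul, pow_add]
      have h9S1 : (9:ℕ) ^ (S + 1) = 9 * (3 ^ S * 3 ^ S) := by
        rw [h9 (S + 1)]; ring
      set X := (2:ℕ) ^ r with hX
      set Z := (3:ℕ) ^ S with hZ
      have hX4 : 4 ≤ X := by
        calc (4:ℕ) = 2 ^ 2 := by norm_num
          _ ≤ 2 ^ r := Nat.pow_le_pow_right (by norm_num) hr2
      have hZ1 : 1 ≤ Z := Nat.one_le_pow _ _ (by norm_num)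
      have hZcase : Z = 1 ∨ 3 ≤ Z := by
        rcases Nat.eq_zero_or_pos S with hS0 | hS1
        · left; rw [hZ, hS0]; norm_num
        · right
          calc (3:ℕ) = 3 ^ 1 := by norm_num
            _ ≤ 3 ^ S := Nat.pow_le_pow_right (by norm_num) hS1
      have key : X * X + 9 * (Z * Z) ≤ (X * Z + 1) * (X * Z + 1) + 2 := by
        rcases hZcase with hZe | hZ3
        · rw [hZe]; nlinarith
        · have hXX : (16:ℤ) ≤ (X:ℤ) * X := by exact_mod_cast Nat.mul_le_mul hX4 hX4
          have hZZ : (9:ℤ) ≤ (Z:ℤ) * Z := by exact_mod_cast Nat.mul_le_mul hZ3 hZ3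
          have hZ3' : (3:ℤ) ≤ (Z:ℤ) := by exact_mod_cast hZ3
          have hX4' : (4:ℤ) ≤ (X:ℤ) := by exact_mod_cast hX4
          zify
          nlinarith [mul_nonneg (sub_nonneg.2 hXX) (sub_nonneg.2 hZZ),
            mul_nonneg (sub_nonneg.2 hX4') (sub_nonneg.2 hZ3')]
      omega
    · have hm2e : (2 ^ r * 3 ^ (S + 1)) ^ 2 = 9 ^ (S + 1) * 2 ^ (2 * r) := by
        rw [h9 (S + 1), two_mul, pow_add]; ring
      rw [hm2e]
      exact mul_dvd_mul_left _ hQ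
end

section
/- Let n ≥ 64 and let k = min{ j ∈ ℤ⁺ : 3^j ≥ √n }. Suppose m satisfies √n < m < 3^k and m = 2^r for some positive integer r. Then there exist integers 1 ≤ a < b ≤ n such that b³ + b ≡ a³ + a (mod m²). -/
/-- Auxiliary: for every `s` there is an odd `u` with `3 ≤ u ≤ 2^(s+2)` and
`2^(s+4) ∣ 3u² + 5` (Hensel lifting; among the square roots one is small). -/
lemma collision_aux : ∀ s : ℕ, ∃ u : ℕ, Odd u ∧ 3 ≤ u ∧ u ≤ 2 ^ (s + 2) ∧
    2 ^ (s + 4) ∣ 3 * u ^ 2 + 5 := by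
  intro s
  induction s with
  | zero => exact ⟨3, ⟨1, by norm_num⟩, le_refl 3, by norm_num, by norm_num⟩
  | succ s ih =>
    obtain ⟨u, hodd, hu3, hub, hdvd⟩ := ih
    set Q : ℕ := 2 ^ (s + 1) with hQdef
    have h22 : 2 ^ (s + 2) = 2 * Q := by rw [hQdef, pow_succ]; ring
    have h23 : 2 ^ (s + 3) = 4 * Q := by rw [hQdef, pow_succ, pow_succ]; ring
    have h24 : 2 ^ (s + 4) = 8 * Q := by rw [hQdef, pow_succ, pow_succ, pow_succ]; ring
    have h25 : 2 ^ (s + 5) = 16 * Q := by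
      rw [hQdef, pow_succ, pow_succ, pow_succ, pow_succ]; ring
    have hQ2 : 2 ≤ Q := by
      have : 2 ^ 1 ≤ 2 ^ (s + 1) := Nat.pow_le_pow_right (by norm_num) (by omega)
      simpa [hQdef] using this
    by_cases hcase : 2 ^ (s + 1 + 4) ∣ 3 * u ^ 2 + 5
    · refine ⟨u, hodd, hu3, ?_, hcase⟩
      have : 2 ^ (s + 2) ≤ 2 ^ (s + 1 + 2) := Nat.pow_le_pow_right (by norm_num) (by omega)
      omega
    · -- lift: take u' = 2^(s+3) - u = 4Q - u
      obtain ⟨c, hc⟩ := hdvd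
      have hcodd : Odd c := by
        rcases Nat.even_or_odd c with he | ho
        · obtain ⟨d, hd⟩ := he
          refine absurd ⟨d, ?_⟩ hcase
          rw [hc, hd, show s + 1 + 4 = s + 5 from rfl, h25, h24]
          ring
        · exact ho
      obtain ⟨u1, hu1⟩ := id hodd
      obtain ⟨c1, hc1⟩ := id hcodd
      have hule : u ≤ 4 * Q := by omega
      have hbnd : 4 * Q - u ≤ 2 ^ (s + 1 + 2) := by
        have : 2 ^ (s + 1 + 2) = 4 * Q := by rw [show s + 1 + 2 = s + 3 from rfl, h23]
        omega
      refine ⟨4 * Q - u, ?_, by omega, hbnd, ?_⟩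
      · exact Nat.Even.sub_odd hule ⟨2 * Q, by ring⟩ hodd
      · -- divisibility over ℤ
        rw [← Int.natCast_dvd_natCast]
        push_cast [hule]
        refine ⟨3 * (Q : ℤ) + c1 - 3 * u1 - 1, ?_⟩
        have hcZ : 3 * (u : ℤ) ^ 2 + 5 = 8 * (Q : ℤ) * c := by
          have h := hc
          rw [h24] at h
          exact_mod_cast h
        have hu1Z : (u : ℤ) = 2 * u1 + 1 := by push_cast [hu1]; ring
        have hc1Z : (c : ℤ) = 2 * c1 + 1 := by push_cast [hc1]; ring
        have hQZ : (2 : ℤ) ^ (s + 1 + 4) = 16 * (Q : ℤ) := by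
          have := h25
          rw [show s + 1 + 4 = s + 5 from rfl]
          exact_mod_cast this
        linear_combination hcZ - 24 * (Q : ℤ) * hu1Z + 8 * (Q : ℤ) * hc1Z -
          (3 * (Q : ℤ) + c1 - 3 * u1 - 1) * hQZ

/-- Case (ii): `n ≥ 64`, `√n < m < 3^k`, and `m = 2^r` for some `r ≥ 1`.  Then there
exist `1 ≤ a < b ≤ n` with `b³ + b ≡ a³ + a (mod m²)`. -/
theorem collision_case_ii (n : ℕ) (hn : 64 ≤ n) (k : ℕ)
    (hk : IsLeast {j : ℕ | 1 ≤ j ∧ Real.sqrt n ≤ 3 ^ j} k)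
    (m r : ℕ) (hr : 1 ≤ r) (hm : m = 2 ^ r)
    (hm1 : Real.sqrt n < m) (hm2 : m < 3 ^ k) :
    ∃ a b : ℕ, 1 ≤ a ∧ a < b ∧ b ≤ n ∧ b ^ 3 + b ≡ a ^ 3 + a [MOD m ^ 2] := by
  -- √n ≥ 8
  have hsqrt8 : (8 : ℝ) ≤ Real.sqrt n := by
    rw [show (8 : ℝ) = Real.sqrt 64 by
      rw [show (64 : ℝ) = 8 ^ 2 by norm_num, Real.sqrt_sq (by norm_num)]]
    exact Real.sqrt_le_sqrt (by exact_mod_cast hn)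
  -- m ≥ 9
  have hm9 : 9 ≤ m := by
    by_contra h
    push_neg at h
    have : (m : ℝ) ≤ 8 := by exact_mod_cast Nat.lt_succ_iff.mp h
    linarith
  -- r ≥ 4
  have hr4 : 4 ≤ r := by
    by_contra h
    push_neg at h
    interval_cases r <;> omega
  -- k ≥ 2
  have hk2 : 2 ≤ k := by
    by_contra h
    push_neg at h
    have h1 : 1 ≤ k := hk.1.1
    have hkeq : k = 1 := by omega
    have h2 := hk.1.2
    rw [hkeq] at h2
    norm_num at h2
    linarith
  -- 3^(k-1) < √n by minimality of k
  have hk1 : (3 : ℝ) ^ (k - 1) < Real.sqrt n := by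
    by_contra h
    push_neg at h
    have : k ≤ k - 1 := hk.2 ⟨by omega, h⟩
    omega
  -- m² < 9 n
  have hm2n : m ^ 2 < 9 * n := by
    have h1 : (m : ℝ) < (3 : ℝ) ^ k := by exact_mod_cast hm2
    have h3k : (3 : ℝ) ^ k = 3 * (3 : ℝ) ^ (k - 1) := by
      rw [← pow_succ']
      congr 1
      omega
    have hmR : (m : ℝ) < 3 * Real.sqrt n := by
      rw [h3k] at h1
      linarith
    have hm0 : (0 : ℝ) ≤ (m : ℝ) := Nat.cast_nonneg m
    have hsq : (m : ℝ) ^ 2 < 9 * n := by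
      have h2 : (m : ℝ) ^ 2 < (3 * Real.sqrt n) ^ 2 := by
        apply sq_lt_sq' _ hmR
        linarith
      have h3 : (3 * Real.sqrt n) ^ 2 = 9 * n := by
        rw [mul_pow, Real.sq_sqrt (by positivity : (0 : ℝ) ≤ (n : ℝ))]
        norm_num
      linarith
    exact_mod_cast hsq
  -- get u from the auxiliary lemma with s = 2r - 6
  obtain ⟨u, hodd, hu3, hub, hdvd⟩ := collision_aux (2 * r - 6)
  have hs4 : 2 * r - 6 + 4 = 2 * r - 2 := by omega
  have hs2 : 2 * r - 6 + 2 = 2 * r - 4 := by omega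
  -- m² = 4 * 2^(2r-6+4) = 16 * 2^(2r-6+2)
  have hmsq : m ^ 2 = 4 * 2 ^ (2 * r - 6 + 4) := by
    rw [hm, ← pow_mul, show (4 : ℕ) = 2 ^ 2 from rfl, ← pow_add]
    congr 1
    omega
  have hsplit : 2 ^ (2 * r - 6 + 4) = 4 * 2 ^ (2 * r - 6 + 2) := by
    rw [show 2 * r - 6 + 4 = (2 * r - 6 + 2) + 2 by omega, pow_add]
    ring
  have h16u : 16 * u ≤ m ^ 2 := by omega
  -- write u = a + 3
  obtain ⟨a, ha⟩ : ∃ a, u = a + 3 := ⟨u - 3, by omega⟩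
  subst ha
  refine ⟨a + 1, a + 5, by omega, by omega, by omega, ?_⟩
  have key : (a + 5) ^ 3 + (a + 5) = ((a + 1) ^ 3 + (a + 1)) + 4 * (3 * (a + 3) ^ 2 + 5) := by
    ring
  have hle : (a + 1) ^ 3 + (a + 1) ≤ (a + 5) ^ 3 + (a + 5) := by omega
  refine ((Nat.modEq_iff_dvd' hle).mpr ?_).symm
  have hdiff : (a + 5) ^ 3 + (a + 5) - ((a + 1) ^ 3 + (a + 1)) = 4 * (3 * (a + 3) ^ 2 + 5) := by
    omega
  rw [hdiff, hmsq]
  exact Nat.mul_dvd_mul_left 4 hdvd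
end

section
/- Let n ≥ 100 and let k = min{ j ∈ ℤ⁺ : 3^j ≥ √n }. Suppose m satisfies √n < m < 3^k and m = δ·p^r, where 1 ≤ δ ≤ 3, p is a prime with p ≡ 1 (mod 3), and r is a positive integer. Then there exist integers 1 ≤ a < b ≤ n such that b³ + b ≡ a³ + a (mod m²). -/
/-- If `p ≡ 1 (mod 3)` is prime and `r ≥ 1`, then `3 s² + 1 ≡ 0 (mod p^r)` is solvable. -/
lemma exists_three_sq_add_one (p r : ℕ) (hp : p.Prime) (hp3 : p % 3 = 1) (hr : 1 ≤ r) :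
    ∃ s : ℕ, p ^ r ∣ 3 * s ^ 2 + 1 := by
  have hp2 : 2 ≤ p := hp.two_le
  have hpne3 : p ≠ 3 := by omega
  have hq1 : 1 < p ^ r := Nat.one_lt_pow (by omega) (by omega)
  haveI : Fact (1 < p ^ r) := ⟨hq1⟩
  haveI : NeZero (p ^ r) := ⟨by omega⟩
  have hpdvd : p ∣ p ^ r := dvd_pow_self p (by omega)
  haveI : NeZero p := ⟨by omega⟩
  set π : ZMod (p ^ r) →+* ZMod p := ZMod.castHom hpdvd (ZMod p) with hπdef
  -- `p ∤ 3`
  have hpnd3 : ¬ (p ∣ 3) := by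
    intro h
    exact hpne3 ((Nat.prime_dvd_prime_iff_eq hp (by norm_num)).mp h)
  have h3ne : ((3 : ℕ) : ZMod p) ≠ 0 := by
    rw [Ne, ZMod.natCast_eq_zero_iff]
    exact hpnd3
  have hπ3 : π (3 : ZMod (p ^ r)) = ((3 : ℕ) : ZMod p) := by
    rw [show ((3 : ZMod (p ^ r))) = ((3 : ℕ) : ZMod (p ^ r)) from by norm_cast, map_natCast]
  -- units criterion
  have hunit : ∀ x : ZMod (p ^ r), π x ≠ 0 → IsUnit x := by
    intro x hx
    have hnd : ¬ (p ∣ x.val) := by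
      intro h
      apply hx
      have : π x = ((x.val : ℕ) : ZMod p) := by
        rw [hπdef, ZMod.castHom_apply, ← ZMod.natCast_val]
      rw [this, ZMod.natCast_eq_zero_iff]
      exact h
    have : IsUnit ((x.val : ℕ) : ZMod (p ^ r)) := by
      rw [ZMod.isUnit_iff_coprime]
      exact Nat.Coprime.pow_right _
        (Nat.coprime_comm.mp ((Nat.Prime.coprime_iff_not_dvd hp).mpr hnd))
    rwa [ZMod.natCast_val, ZMod.cast_id] at this
  -- lift of elements in the kernel
  have hlift : ∀ x : ZMod (p ^ r), π x = 0 → ∃ z : ZMod (p ^ r), x = (p : ZMod (p ^ r)) * z := by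
    intro x hx
    have hdvd : p ∣ x.val := by
      rw [hπdef, ZMod.castHom_apply, ← ZMod.natCast_val,
        ZMod.natCast_eq_zero_iff] at hx
      exact hx
    obtain ⟨c, hc⟩ := hdvd
    refine ⟨(c : ZMod (p ^ r)), ?_⟩
    have : ((x.val : ℕ) : ZMod (p ^ r)) = x := by rw [ZMod.natCast_val, ZMod.cast_id]
    rw [← this, hc]
    push_cast
    ring
  -- Cauchy: an element of order 3 in the unit group
  have h3dvd : 3 ∣ Fintype.card (ZMod (p ^ r))ˣ := by
    rw [ZMod.card_units_eq_totient, Nat.totient_prime_pow hp (by omega)]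
    exact Dvd.dvd.mul_left (by omega : 3 ∣ p - 1) _
  haveI : Fact (Nat.Prime 3) := ⟨by norm_num⟩
  obtain ⟨ω, hω⟩ := exists_prime_orderOf_dvd_card 3 h3dvd
  set w : ZMod (p ^ r) := (ω : ZMod (p ^ r)) with hwdef
  have hw3 : w ^ 3 = 1 := by
    have h := pow_orderOf_eq_one ω
    rw [hω] at h
    have := congrArg Units.val h
    push_cast at this
    exact this
  have hwne : w ≠ 1 := by
    intro h
    have : ω = 1 := Units.ext h
    rw [this, orderOf_one] at hω
    omega
  -- `w - 1` is a unit
  have hwu : IsUnit (w - 1) := by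
    apply hunit
    intro hker
    obtain ⟨z, hz⟩ := hlift _ hker
    have hwz : w = 1 + (p : ZMod (p ^ r)) * z := by rw [← hz]; ring
    have hkey : (p : ZMod (p ^ r)) * (z * (3 + 3 * ((p : ZMod (p ^ r)) * z)
        + ((p : ZMod (p ^ r)) * z) ^ 2)) = 0 := by
      have h := hw3
      rw [hwz] at h
      linear_combination h
    have huu : IsUnit (3 + 3 * ((p : ZMod (p ^ r)) * z) + ((p : ZMod (p ^ r)) * z) ^ 2) := by
      apply hunit
      have hπp : π (p : ZMod (p ^ r)) = 0 := by
        rw [map_natCast, ZMod.natCast_self]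
      have : π (3 + 3 * ((p : ZMod (p ^ r)) * z) + ((p : ZMod (p ^ r)) * z) ^ 2)
          = ((3 : ℕ) : ZMod p) := by
        simp only [map_add, map_mul, map_pow, hπp, hπ3]
        ring
      rw [this]
      exact h3ne
    have hpz : (p : ZMod (p ^ r)) * z = 0 := by
      apply (huu.mul_left_eq_zero).mp
      linear_combination hkey
    apply hwne
    rw [hwz, hpz, add_zero]
  have hsum : w ^ 2 + w + 1 = 0 := by
    have h0 : (w - 1) * (w ^ 2 + w + 1) = 0 := by linear_combination hw3
    exact (hwu.mul_right_eq_zero).mp h0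
  have hu3 : IsUnit (3 : ZMod (p ^ r)) := by
    apply hunit
    rw [hπ3]
    exact h3ne
  set c : ZMod (p ^ r) := ↑hu3.unit⁻¹ with hcdef
  have hc : (3 : ZMod (p ^ r)) * c = 1 := hu3.mul_val_inv
  set x : ZMod (p ^ r) := (2 * w + 1) * c with hxdef
  have hx : 3 * x ^ 2 + 1 = 0 := by
    rw [hxdef]
    linear_combination (12 * c ^ 2) * hsum - (3 * c + 1) * hc
  refine ⟨x.val, ?_⟩
  have hcast : ((3 * x.val ^ 2 + 1 : ℕ) : ZMod (p ^ r)) = 0 := by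
    push_cast [ZMod.natCast_val, ZMod.cast_id]
    exact hx
  exact (ZMod.natCast_eq_zero_iff _ _).mp hcast

/-- Collision construction: if `m² ∣ d * (3a² + 3ad + d² + 1)` then `a` and `a + d` collide. -/
lemma collision_of_dvd (m a d : ℕ) (h : m ^ 2 ∣ d * (3 * a ^ 2 + 3 * a * d + d ^ 2 + 1)) :
    (a + d) ^ 3 + (a + d) ≡ a ^ 3 + a [MOD m ^ 2] := by
  obtain ⟨t, ht⟩ := h
  have key : (a + d) ^ 3 + (a + d) = (a ^ 3 + a) + m ^ 2 * t := by
    rw [← ht]; ring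
  show ((a + d) ^ 3 + (a + d)) % m ^ 2 = (a ^ 3 + a) % m ^ 2
  rw [key, Nat.add_mul_mod_self_left]

/-- `n ≥ 100`, `√n < m < 3^k`, and `m = δ·p^r` with `1 ≤ δ ≤ 3`, `p ≡ 1 (mod 3)` prime and
`r ≥ 1`.  Then there exist `1 ≤ a < b ≤ n` with `b³ + b ≡ a³ + a (mod m²)`. -/
theorem collision_case_i_one_mod_three (n : ℕ) (hn : 100 ≤ n) (k : ℕ)
    (hk : IsLeast {j : ℕ | 1 ≤ j ∧ Real.sqrt n ≤ 3 ^ j} k)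
    (m δ r p : ℕ) (hp : p.Prime) (hp3 : p % 3 = 1)
    (hδ1 : 1 ≤ δ) (hδ3 : δ ≤ 3) (hr : 1 ≤ r) (hm : m = δ * p ^ r)
    (hm1 : Real.sqrt n < m) (hm2 : m < 3 ^ k) :
    ∃ a b : ℕ, 1 ≤ a ∧ a < b ∧ b ≤ n ∧ b ^ 3 + b ≡ a ^ 3 + a [MOD m ^ 2] := by
  have hp2 : 2 ≤ p := hp.two_le
  set q := p ^ r with hqdef
  have hq2 : 2 ≤ q := le_trans hp2 (Nat.le_self_pow (by omega) p)
  obtain ⟨s, hs⟩ := exists_three_sq_add_one p r hp hp3 hr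
  set s₀ := s % q with hs₀def
  have hs₀ : q ∣ 3 * s₀ ^ 2 + 1 := by
    have h1 : s₀ ≡ s [MOD q] := Nat.mod_modEq s q
    have h2 : 3 * s₀ ^ 2 + 1 ≡ 3 * s ^ 2 + 1 [MOD q] := ((h1.pow 2).mul_left 3).add_right 1
    exact (Nat.modEq_zero_iff_dvd).mp (h2.trans ((Nat.modEq_zero_iff_dvd).mpr hs))
  have hs₀pos : 1 ≤ s₀ := by
    rcases Nat.eq_zero_or_pos s₀ with h | h
    · rw [h] at hs₀
      simp at hs₀
      omega
    · exact h
  have hs₀lt : s₀ < q := Nat.mod_lt _ (by omega)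
  -- real estimates
  have h10 : (10 : ℝ) ≤ Real.sqrt n := by
    have h100 : Real.sqrt 100 ≤ Real.sqrt n := Real.sqrt_le_sqrt (by exact_mod_cast hn)
    rwa [show (100 : ℝ) = 10 ^ 2 by norm_num, Real.sqrt_sq (by norm_num)] at h100
  have hk1 : 1 ≤ k := hk.1.1
  have hkub : Real.sqrt n ≤ (3 : ℝ) ^ k := hk.1.2
  have hk2 : 2 ≤ k := by
    by_contra h
    have hke : k = 1 := by omega
    rw [hke, pow_one] at hkub
    linarith
  have hklt : (3 : ℝ) ^ (k - 1) < Real.sqrt n := by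
    by_contra h
    push_neg at h
    have := hk.2 ⟨by omega, h⟩
    omega
  have hmR : (m : ℝ) < 3 * Real.sqrt n := by
    have h1 : (m : ℝ) < ((3 ^ k : ℕ) : ℝ) := by exact_mod_cast hm2
    have h2 : ((3 ^ k : ℕ) : ℝ) = 3 * (3 : ℝ) ^ (k - 1) := by
      push_cast
      rw [← pow_succ']
      congr 1
      omega
    rw [h2] at h1
    linarith
  have hnn : Real.sqrt n * Real.sqrt n = (n : ℝ) := Real.mul_self_sqrt (by positivity)
  interval_cases δ
  · -- δ = 1 : m = q
    rw [one_mul] at hm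
    have hmq : m = q := hm
    refine ⟨s₀, s₀ + m, hs₀pos, by omega, ?_, ?_⟩
    · -- bound
      have hb : ((s₀ + m : ℕ) : ℝ) < 2 * (m : ℝ) := by
        push_cast
        have : (s₀ : ℝ) < (m : ℝ) := by exact_mod_cast (hmq ▸ hs₀lt)
        linarith
      have : ((s₀ + m : ℕ) : ℝ) < (n : ℝ) := by nlinarith [hb, hmR, h10, hnn]
      exact_mod_cast this.le
    · apply collision_of_dvd
      have hX : m ∣ 3 * s₀ ^ 2 + 3 * s₀ * m + m ^ 2 + 1 := by
        obtain ⟨t, ht⟩ := hs₀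
        rw [hmq]
        exact ⟨t + 3 * s₀ + q, by zify at ht ⊢; linear_combination ht⟩
      calc m ^ 2 = m * m := sq m
        _ ∣ m * (3 * s₀ ^ 2 + 3 * s₀ * m + m ^ 2 + 1) := mul_dvd_mul_left m hX
  · -- δ = 2 : m = 2q
    have hmq : m = 2 * q := hm
    have hpodd : p % 2 = 1 := by
      rcases hp.eq_two_or_odd with h | h
      · omega
      · exact h
    have hqodd : q % 2 = 1 := by
      have : Odd q := (Nat.odd_iff.mpr hpodd).pow
      exact Nat.odd_iff.mp this
    obtain ⟨a, hapos, haub, haodd, haq⟩ :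
        ∃ a : ℕ, 1 ≤ a ∧ a ≤ 2 * q - 1 ∧ a % 2 = 1 ∧ q ∣ 3 * a ^ 2 + 1 := by
      by_cases hpar : s₀ % 2 = 1
      · exact ⟨s₀, hs₀pos, by omega, hpar, hs₀⟩
      · refine ⟨s₀ + q, by omega, by omega, by omega, ?_⟩
        obtain ⟨t, ht⟩ := hs₀
        exact ⟨t + 6 * s₀ + 3 * q, by zify at ht ⊢; linear_combination ht⟩
    have ha2 : 2 ∣ 3 * a ^ 2 + 1 := by
      have h2 : a ^ 2 % 2 = 1 := by
        rw [Nat.pow_mod, haodd]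
      omega
    refine ⟨a, a + m, hapos, by omega, ?_, ?_⟩
    · have hb : ((a + m : ℕ) : ℝ) < 2 * (m : ℝ) := by
        push_cast
        have : (a : ℝ) < (m : ℝ) := by
          have : a < m := by omega
          exact_mod_cast this
        linarith
      have : ((a + m : ℕ) : ℝ) < (n : ℝ) := by nlinarith [hb, hmR, h10, hnn]
      exact_mod_cast this.le
    · apply collision_of_dvd
      have hmdvd : m ∣ 3 * a ^ 2 + 1 := by
        rw [hmq]
        exact Nat.Coprime.mul_dvd_of_dvd_of_dvd
          ((Nat.prime_two.coprime_iff_not_dvd).mpr (by omega)) ha2 haq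
      have hX : m ∣ 3 * a ^ 2 + 3 * a * m + m ^ 2 + 1 := by
        obtain ⟨t, ht⟩ := hmdvd
        exact ⟨t + 3 * a + m, by zify at ht ⊢; linear_combination ht⟩
      calc m ^ 2 = m * m := sq m
        _ ∣ m * (3 * a ^ 2 + 3 * a * m + m ^ 2 + 1) := mul_dvd_mul_left m hX
  · -- δ = 3 : m = 3q, use d = 9q
    have hmq : m = 3 * q := hm
    refine ⟨s₀, s₀ + 9 * q, hs₀pos, by omega, ?_, ?_⟩
    · have hqR : (q : ℝ) < Real.sqrt n := by
        have : (m : ℝ) = 3 * (q : ℝ) := by rw [hmq]; push_cast; ring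
        rw [this] at hmR
        linarith
      have hb : ((s₀ + 9 * q : ℕ) : ℝ) < 10 * (q : ℝ) := by
        push_cast
        have : (s₀ : ℝ) < (q : ℝ) := by exact_mod_cast hs₀lt
        linarith
      have : ((s₀ + 9 * q : ℕ) : ℝ) < (n : ℝ) := by nlinarith [hb, hqR, h10, hnn]
      exact_mod_cast this.le
    · have hX : q ∣ 3 * s₀ ^ 2 + 3 * s₀ * (9 * q) + (9 * q) ^ 2 + 1 := by
        obtain ⟨t, ht⟩ := hs₀
        exact ⟨t + 27 * s₀ + 81 * q, by zify at ht ⊢; linear_combination ht⟩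
      have hdvd : m ^ 2 ∣ (9 * q) * (3 * s₀ ^ 2 + 3 * s₀ * (9 * q) + (9 * q) ^ 2 + 1) := by
        have hm2eq : m ^ 2 = 9 * q * q := by rw [hmq]; ring
        rw [hm2eq]
        exact mul_dvd_mul_left (9 * q) hX
      exact collision_of_dvd m s₀ (9 * q) hdvd
end
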